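/- arXiv:2604.08554 — 6 statements merged into one kernel-verified Lean document; each statement's English description precedes it below -/
import Mathlib

section
/- Suppose 0 < α ≤ 1. For the mixed-environment count chain the states 0 and M are absorbing; letting τ = inf{t ≥ 0 : n(t) ∈ {0, M}}, one has τ < ∞ almost surely, and for every starting state k ∈ {0,…,M}, P(n(τ) = 0 | n(0) = k) = 1 − k/M. In particular the extinction probability does not depend on α. -/
/-!
Mixed-environment count chain (Wright–Fisher-style drift).

Fix `M ≥ 2` and a replacement fraction `α ∈ [0,1]` with `αM` an integer;
we write `A` for the natural number `αM`, so `(1-α)M = M - A` positions are kept.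
Conditional on `n(t) = n`:
* `J` is hypergeometric (population `M`, `n` successes, `M - A` draws);
* `K ∼ Binomial(A, n/M)` independent of `J`;
* `n(t+1) = J + K`.

`chainStep M A n m` is the resulting one-step transition probability
`P(n(t+1) = m | n(t) = n)`.
-/

/-- Hypergeometric pmf: number of minority tokens among the `M - A` kept positions. -/
noncomputable def hypPMF (M A n j : ℕ) : ℝ :=
  ((Nat.choose n j : ℝ) * (Nat.choose (M - n) ((M - A) - j) : ℝ)) /
    (Nat.choose M (M - A) : ℝ)

/-- Binomial pmf: number of minority tokens among the `A` freshly resampled positions,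
each minority with probability `n/M`. -/
noncomputable def binPMF (M A n k : ℕ) : ℝ :=
  (Nat.choose A k : ℝ) * ((n : ℝ) / (M : ℝ)) ^ k * (1 - (n : ℝ) / (M : ℝ)) ^ (A - k)

/-- One-step transition probability of the mixed-environment count chain:
`n(t+1) = J + K` with `J` hypergeometric and `K` binomial, conditionally independent. -/
noncomputable def chainStep (M A n m : ℕ) : ℝ :=
  ∑ j ∈ Finset.range (M - A + 1), ∑ k ∈ Finset.range (A + 1),
    if j + k = m then hypPMF M A n j * binPMF M A n k else 0

open Finset

lemma vander (a b d : ℕ) :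
    ∑ j ∈ range (d+1), a.choose j * b.choose (d - j) = (a+b).choose d := by
  rw [Nat.add_choose_eq, Finset.Nat.sum_antidiagonal_eq_sum_range_succ_mk]

lemma hyp_nonneg (M A n j : ℕ) : 0 ≤ hypPMF M A n j := by
  unfold hypPMF; positivity

lemma bin_nonneg {M n : ℕ} (hn : n ≤ M) (hM : 0 < M) (A k : ℕ) :
    0 ≤ binPMF M A n k := by
  unfold binPMF
  have h1 : (n : ℝ) / M ≤ 1 := by
    rw [div_le_one (by exact_mod_cast hM)]; exact_mod_cast hn
  have h0 : (0:ℝ) ≤ (n : ℝ) / M := by positivity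
  have := sub_nonneg.mpr h1
  positivity

lemma cs_nonneg {M n : ℕ} (hn : n ≤ M) (hM : 0 < M) (A m : ℕ) :
    0 ≤ chainStep M A n m := by
  unfold chainStep
  refine Finset.sum_nonneg fun j _ => Finset.sum_nonneg fun k _ => ?_
  split
  · exact mul_nonneg (hyp_nonneg M A n j) (bin_nonneg hn hM A k)
  · exact le_refl 0

lemma cs_gt {M A n m : ℕ} (hAM : A ≤ M) (hm : M < m) : chainStep M A n m = 0 := by
  unfold chainStep
  refine Finset.sum_eq_zero fun j hj => Finset.sum_eq_zero fun k hk => ?_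
  rcases Finset.mem_range.mp hj with hj'
  rcases Finset.mem_range.mp hk with hk'
  have hne : ¬ (j + k = m) := by omega
  simp [hne]

lemma hyp_sum {M A n : ℕ} (hn : n ≤ M) (hAM : A ≤ M) :
    ∑ j ∈ range (M - A + 1), hypPMF M A n j = 1 := by
  unfold hypPMF
  rw [← Finset.sum_div]
  have hden : (0:ℝ) < (Nat.choose M (M - A) : ℝ) := by
    exact_mod_cast Nat.choose_pos (Nat.sub_le M A)
  rw [div_eq_one_iff_eq (ne_of_gt hden)]
  have := vander n (M - n) (M - A)
  rw [Nat.add_sub_cancel' hn] at this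
  rw [← this]
  push_cast
  rfl

lemma bin_sum {M : ℕ} (n A : ℕ) :
    ∑ k ∈ range (A + 1), binPMF M A n k = 1 := by
  unfold binPMF
  calc ∑ k ∈ range (A + 1), binPMF M A n k
      = ∑ k ∈ range (A + 1), ((n:ℝ)/M)^k * (1 - (n:ℝ)/M)^(A-k) * (A.choose k) :=
        Finset.sum_congr rfl fun k _ => by unfold binPMF; ring
    _ = ((n:ℝ)/M + (1 - (n:ℝ)/M)) ^ A := (add_pow _ _ _).symm
    _ = 1 := by norm_num

lemma cs_sum {M A n : ℕ} (hn : n ≤ M) (hAM : A ≤ M) (hM : 0 < M) :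
    ∑ m ∈ range (M + 1), chainStep M A n m = 1 := by
  unfold chainStep
  rw [Finset.sum_comm]
  have key : ∀ j ∈ range (M - A + 1), ∑ m ∈ range (M+1), ∑ k ∈ range (A + 1),
      (if j + k = m then hypPMF M A n j * binPMF M A n k else 0)
      = hypPMF M A n j * ∑ k ∈ range (A + 1), binPMF M A n k := by
    intro j hj
    rw [Finset.sum_comm, Finset.mul_sum]
    refine Finset.sum_congr rfl fun k hk => ?_
    have hjk : j + k ∈ range (M+1) := by
      simp only [Finset.mem_range] at *
      omega
    rw [Finset.sum_ite_eq (range (M+1)) (j+k) (fun _ => hypPMF M A n j * binPMF M A n k), if_pos hjk]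
  rw [Finset.sum_congr rfl key]
  simp_rw [bin_sum n A, mul_one]
  exact hyp_sum hn hAM

lemma bin_mean {M : ℕ} (n A : ℕ) :
    ∑ k ∈ range (A + 1), (k:ℝ) * binPMF M A n k = A * ((n:ℝ)/M) := by
  cases A with
  | zero => simp [binPMF]
  | succ B =>
    set p : ℝ := (n:ℝ)/M with hp
    calc ∑ k ∈ range (B + 1 + 1), (k:ℝ) * binPMF M (B+1) n k
        = ∑ i ∈ range (B+1), ((i:ℝ)+1) * binPMF M (B+1) n (i+1) := by
          rw [Finset.sum_range_succ']
          push_cast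
          norm_num
      _ = ∑ i ∈ range (B+1), ((B:ℝ)+1) * p * ((B.choose i : ℝ) * p^i * (1-p)^(B-i)) := by
          refine Finset.sum_congr rfl fun i hi => ?_
          unfold binPMF
          have hnat : (B+1) * B.choose i = (B+1).choose (i+1) * (i+1) :=
            Nat.add_one_mul_choose_eq B i
          have hcast : ((B:ℝ)+1) * (B.choose i : ℝ) = ((B+1).choose (i+1) : ℝ) * ((i:ℝ)+1) := by
            exact_mod_cast congrArg (Nat.cast (R := ℝ)) hnat
          have hsub : B + 1 - (i + 1) = B - i := by omega
          rw [hsub, hp]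
          push_cast [pow_succ]
          linear_combination (-( ((n:ℝ)/M)^i * ((n:ℝ)/M) * (1-(n:ℝ)/M)^(B-i))) * hcast
      _ = ((B:ℝ)+1) * p * ∑ i ∈ range (B+1), ((B.choose i : ℝ) * p^i * (1-p)^(B-i)) := by
          rw [Finset.mul_sum]
      _ = ((B:ℝ)+1) * p * 1 := by
          rw [show ∑ i ∈ range (B+1), ((B.choose i : ℝ) * p^i * (1-p)^(B-i)) = ∑ i ∈ range (B+1), binPMF M B n i from Finset.sum_congr rfl fun i _ => by unfold binPMF; ring]
          rw [bin_sum n B]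
      _ = ((B:ℕ)+1 : ℕ) * p := by push_cast; ring

lemma hyp_mean {M A n : ℕ} (hn : n ≤ M) (hAM : A ≤ M) (hM : 0 < M) :
    ∑ j ∈ range (M - A + 1), (j:ℝ) * hypPMF M A n j
      = (n : ℝ) * ((M - A : ℕ) : ℝ) / M := by
  rcases Nat.eq_zero_or_pos (M - A) with hd | hd
  · rw [hd]; simp
  · obtain ⟨e, he⟩ : ∃ e, M - A = e + 1 := ⟨M - A - 1, by omega⟩
    rw [he]
    have hnat : ∑ j ∈ range (e + 1 + 1), j * (n.choose j * (M - n).choose (e + 1 - j))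
        = n * (M-1).choose e := by
      cases n with
      | zero =>
        simp only [Nat.zero_mul, zero_mul]
        refine Finset.sum_eq_zero fun j hj => ?_
        cases j with
        | zero => simp
        | succ i => simp [Nat.choose_eq_zero_of_lt (Nat.succ_pos i)]
      | succ m =>
        rw [Finset.sum_range_succ']
        simp only [Nat.zero_mul, add_zero, zero_mul]
        have hstep : ∀ i, (i+1) * ((m+1).choose (i+1) * (M - (m+1)).choose (e + 1 - (i+1)))
            = (m+1) * (m.choose i * (M - (m+1)).choose (e - i)) := by
          intro i
          have h1 : (m+1) * m.choose i = (m+1).choose (i+1) * (i+1) :=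
            Nat.add_one_mul_choose_eq m i
          have h2 : e + 1 - (i + 1) = e - i := by omega
          rw [h2]
          ring_nf
          ring_nf at h1
          rw [mul_comm] at h1 ⊢
          nlinarith [h1]
        calc ∑ i ∈ range (e+1), (i+1) * ((m+1).choose (i+1) * (M - (m+1)).choose (e + 1 - (i+1)))
            = ∑ i ∈ range (e+1), (m+1) * (m.choose i * (M - (m+1)).choose (e - i)) :=
              Finset.sum_congr rfl fun i _ => hstep i
          _ = (m+1) * ∑ i ∈ range (e+1), m.choose i * (M - (m+1)).choose (e - i) :=
              (Finset.mul_sum _ _ _).symm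
          _ = (m+1) * (m + (M - (m+1))).choose e := by rw [vander]
          _ = (m+1) * (M-1).choose e := by
              congr 2
              omega
    have hkey : M * (M-1).choose e = M.choose (e+1) * (e+1) := by
      have := Nat.add_one_mul_choose_eq (M-1) e
      have hM1 : M - 1 + 1 = M := by omega
      rwa [hM1] at this
    have hden : (0:ℝ) < (M.choose (e+1) : ℝ) := by
      have : e + 1 ≤ M := by omega
      exact_mod_cast Nat.choose_pos this
    unfold hypPMF
    rw [he]
    calc ∑ j ∈ range (e+1+1), (j:ℝ) * ((n.choose j : ℝ) * ((M-n).choose (e+1-j) : ℝ) / (M.choose (e+1) : ℝ))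
        = (∑ j ∈ range (e+1+1), (j:ℝ) * ((n.choose j : ℝ) * ((M-n).choose (e+1-j) : ℝ))) / (M.choose (e+1) : ℝ) := by
          rw [Finset.sum_div]
          exact Finset.sum_congr rfl fun j _ => by ring
      _ = ((n * (M-1).choose e : ℕ) : ℝ) / (M.choose (e+1) : ℝ) := by
          congr 1
          rw [← hnat]
          push_cast
          rfl
      _ = (n : ℝ) * (((e+1 : ℕ)) : ℝ) / M := by
          rw [div_eq_div_iff (ne_of_gt hden) (by exact_mod_cast hM : (0:ℝ) < (M:ℝ)).ne']
          push_cast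
          have hkeyR : (M:ℝ) * ((M-1).choose e : ℝ) = (M.choose (e+1) : ℝ) * ((e:ℝ)+1) := by
            exact_mod_cast congrArg (Nat.cast (R := ℝ)) hkey
          linear_combination (n : ℝ) * hkeyR

lemma cs_mean {M A n : ℕ} (hn : n ≤ M) (hAM : A ≤ M) (hM : 0 < M) :
    ∑ m ∈ range (M + 1), (m:ℝ) * chainStep M A n m = n := by
  have hMR : (0:ℝ) < (M:ℝ) := by exact_mod_cast hM
  have step1 : ∑ m ∈ range (M + 1), (m:ℝ) * chainStep M A n m
      = ∑ j ∈ range (M - A + 1), ∑ k ∈ range (A + 1),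
          ((j:ℝ) + (k:ℝ)) * (hypPMF M A n j * binPMF M A n k) := by
    unfold chainStep
    simp_rw [Finset.mul_sum, mul_ite, mul_zero]
    rw [Finset.sum_comm]
    refine Finset.sum_congr rfl fun j hj => ?_
    rw [Finset.sum_comm]
    refine Finset.sum_congr rfl fun k hk => ?_
    have hjk : j + k ∈ range (M+1) := by
      simp only [Finset.mem_range] at *
      omega
    rw [Finset.sum_ite_eq (range (M+1)) (j+k)
        (fun m => (m:ℝ) * (hypPMF M A n j * binPMF M A n k)), if_pos hjk]
    push_cast
    ring
  rw [step1]
  have step2 : ∑ j ∈ range (M - A + 1), ∑ k ∈ range (A + 1),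
      ((j:ℝ) + (k:ℝ)) * (hypPMF M A n j * binPMF M A n k)
      = (∑ j ∈ range (M - A + 1), (j:ℝ) * hypPMF M A n j)
          * (∑ k ∈ range (A + 1), binPMF M A n k)
        + (∑ j ∈ range (M - A + 1), hypPMF M A n j)
          * (∑ k ∈ range (A + 1), (k:ℝ) * binPMF M A n k) := by
    rw [Finset.sum_mul_sum, Finset.sum_mul_sum, ← Finset.sum_add_distrib]
    refine Finset.sum_congr rfl fun j _ => ?_
    rw [← Finset.sum_add_distrib]
    refine Finset.sum_congr rfl fun k _ => by ring
  rw [step2, bin_sum n A, hyp_sum hn hAM, hyp_mean hn hAM hM, bin_mean n A]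
  have hsub : ((M - A : ℕ) : ℝ) = (M:ℝ) - (A:ℝ) := Nat.cast_sub hAM
  rw [hsub]
  field_simp
  ring

lemma hyp_zero {M A : ℕ} (hAM : A ≤ M) (j : ℕ) :
    hypPMF M A 0 j = if j = 0 then 1 else 0 := by
  unfold hypPMF
  have h : ((M.choose (M-A)):ℝ) ≠ 0 := by
    exact_mod_cast (Nat.choose_pos (Nat.sub_le M A)).ne'
  cases j with
  | zero => simp [div_self h]
  | succ i =>
    simp [Nat.choose_eq_zero_of_lt (Nat.succ_pos i)]

lemma bin_zero {M A : ℕ} (k : ℕ) : binPMF M A 0 k = if k = 0 then 1 else 0 := by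
  unfold binPMF
  cases k with
  | zero => simp
  | succ i => simp

lemma cs_zero {M A : ℕ} (hAM : A ≤ M) (m : ℕ) :
    chainStep M A 0 m = if m = 0 then 1 else 0 := by
  unfold chainStep
  simp_rw [hyp_zero hAM, bin_zero]
  rw [Finset.sum_eq_single 0]
  · rw [Finset.sum_eq_single 0]
    · simp only [if_pos rfl, add_zero, mul_one]
      rcases eq_or_ne m 0 with rfl | hm
      · simp
      · simp [hm, Ne.symm hm]
    · intro k _ hk
      simp [hk]
    · intro h
      exact absurd (Finset.mem_range.mpr (Nat.succ_pos A)) h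
  · intro j _ hj
    refine Finset.sum_eq_zero fun k _ => ?_
    simp [hj]
  · intro h
    exact absurd (Finset.mem_range.mpr (Nat.succ_pos (M - A))) h

lemma hyp_M {M A : ℕ} (hAM : A ≤ M) {j : ℕ} (hj : j ≤ M - A) :
    hypPMF M A M j = if j = M - A then 1 else 0 := by
  unfold hypPMF
  rw [Nat.sub_self]
  have h : ((M.choose (M-A)):ℝ) ≠ 0 := by
    exact_mod_cast (Nat.choose_pos (Nat.sub_le M A)).ne'
  rcases eq_or_ne j (M - A) with rfl | hne
  · simp [div_self h]
  · rw [if_neg hne]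
    have : 0 < M - A - j := by omega
    rw [Nat.choose_eq_zero_of_lt this]
    simp

lemma bin_M {M A : ℕ} (hM : 0 < M) (k : ℕ) :
    binPMF M A M k = if k = A then 1 else 0 := by
  unfold binPMF
  have h1 : (M:ℝ)/(M:ℝ) = 1 := div_self (by exact_mod_cast hM.ne')
  rw [h1]
  rcases eq_or_ne k A with rfl | hne
  · simp
  · rcases Nat.lt_or_ge A k with h | h
    · rw [Nat.choose_eq_zero_of_lt h]
      simp [hne]
    · have : 0 < A - k := by omega
      rw [if_neg hne]
      rw [show (1:ℝ) - 1 = 0 by ring, zero_pow (by omega : A - k ≠ 0)]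
      ring

lemma cs_M {M A : ℕ} (hAM : A ≤ M) (hM : 0 < M) (m : ℕ) :
    chainStep M A M m = if m = M then 1 else 0 := by
  unfold chainStep
  have hj : ∀ j ∈ range (M - A + 1), ∀ k, hypPMF M A M j * binPMF M A M k
      = (if j = M - A then 1 else 0) * (if k = A then 1 else 0) := by
    intro j hjm k
    rw [hyp_M hAM (by simpa [Nat.lt_succ_iff] using hjm), bin_M hM]
  rw [Finset.sum_congr rfl fun j hjm => Finset.sum_congr rfl fun k _ =>
    by rw [hj j hjm k]]
  rw [Finset.sum_eq_single (M - A)]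
  · rw [Finset.sum_eq_single A]
    · simp only [if_pos rfl, mul_one, one_mul]
      have hsa : M - A + A = M := Nat.sub_add_cancel hAM
      rw [hsa]
      rcases eq_or_ne m M with rfl | hm
      · simp
      · simp [hm, Ne.symm hm]
    · intro k _ hk; simp [hk]
    · intro h; exact absurd (Finset.mem_range.mpr (Nat.lt_succ_self A)) h
  · intro j _ hjne
    refine Finset.sum_eq_zero fun k _ => ?_
    simp [hjne]
  · intro h; exact absurd (Finset.mem_range.mpr (Nat.lt_succ_self (M - A))) h

lemma hyp_pos {M A n j : ℕ} (hj1 : j ≤ n) (hj2 : (M - A) - j ≤ M - n) :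
    0 < hypPMF M A n j := by
  unfold hypPMF
  have h1 : 0 < n.choose j := Nat.choose_pos hj1
  have h2 : 0 < (M - n).choose ((M - A) - j) := Nat.choose_pos hj2
  have h3 : 0 < M.choose (M - A) := Nat.choose_pos (Nat.sub_le M A)
  have h1' : (0:ℝ) < n.choose j := by exact_mod_cast h1
  have h2' : (0:ℝ) < (M - n).choose ((M - A) - j) := by exact_mod_cast h2
  have h3' : (0:ℝ) < M.choose (M - A) := by exact_mod_cast h3
  positivity

lemma bin_pos {M A n k : ℕ} (hn1 : 1 ≤ n) (hn2 : n < M) (hk : k ≤ A) :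
    0 < binPMF M A n k := by
  unfold binPMF
  have hM : (0:ℝ) < M := by exact_mod_cast lt_of_le_of_lt (Nat.zero_le n) hn2
  have hp : (0:ℝ) < (n:ℝ)/M := by
    apply div_pos _ hM
    exact_mod_cast hn1
  have hq : (0:ℝ) < 1 - (n:ℝ)/M := by
    rw [sub_pos, div_lt_one hM]
    exact_mod_cast hn2
  have hc : (0:ℝ) < (A.choose k : ℝ) := by exact_mod_cast Nat.choose_pos hk
  positivity

lemma cs_pos_of {M A n m j k : ℕ} (hn : n ≤ M) (hM : 0 < M)
    (hj : j ∈ range (M - A + 1)) (hk : k ∈ range (A + 1)) (hjk : j + k = m)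
    (hpos : 0 < hypPMF M A n j * binPMF M A n k) : 0 < chainStep M A n m := by
  unfold chainStep
  have inner_nonneg : ∀ j' ∈ range (M - A + 1),
      0 ≤ ∑ k' ∈ range (A + 1), (if j' + k' = m then hypPMF M A n j' * binPMF M A n k' else 0) := by
    intro j' _
    refine Finset.sum_nonneg fun k' _ => ?_
    split
    · exact mul_nonneg (hyp_nonneg M A n j') (bin_nonneg hn hM A k')
    · exact le_refl 0
  refine Finset.sum_pos' inner_nonneg ⟨j, hj, ?_⟩
  refine Finset.sum_pos' (fun k' _ => ?_) ⟨k, hk, ?_⟩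
  · split
    · exact mul_nonneg (hyp_nonneg M A n j) (bin_nonneg hn hM A k')
    · exact le_refl 0
  · rw [if_pos hjk]
    exact hpos

lemma cs_down {M A n : ℕ} (hA1 : 1 ≤ A) (hAM : A ≤ M) (hn1 : 1 ≤ n) (hn2 : n ≤ M - 1)
    (hM : 2 ≤ M) : 0 < chainStep M A n (n - 1) := by
  have hM0 : 0 < M := by omega
  have hnM : n ≤ M := by omega
  have hnltM : n < M := by omega
  rcases le_or_gt (n - 1) (M - A) with hcase | hcase
  · refine cs_pos_of hnM hM0 (j := n - 1) (k := 0)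
      (Finset.mem_range.mpr (by omega)) (Finset.mem_range.mpr (by omega)) (by omega) ?_
    refine mul_pos (hyp_pos (by omega) (by omega)) (bin_pos hn1 hnltM (Nat.zero_le A))
  · refine cs_pos_of hnM hM0 (j := M - A) (k := (n - 1) - (M - A))
      (Finset.mem_range.mpr (by omega)) (Finset.mem_range.mpr (by omega)) (by omega) ?_
    refine mul_pos (hyp_pos (by omega) (by omega)) (bin_pos hn1 hnltM (by omega))

lemma cs_le_one {M A n m : ℕ} (hn : n ≤ M) (hAM : A ≤ M) (hM : 0 < M) :
    chainStep M A n m ≤ 1 := by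
  rcases le_or_gt m M with hm | hm
  · calc chainStep M A n m ≤ ∑ m' ∈ range (M + 1), chainStep M A n m' := by
          refine Finset.single_le_sum (fun m' _ => cs_nonneg hn hM A m') ?_
          exact Finset.mem_range.mpr (by omega)
      _ = 1 := cs_sum hn hAM hM
  · rw [cs_gt hAM hm]
    norm_num

noncomputable def Qk (M A : ℕ) : ℕ → ℕ → ℕ → ℝ
  | 0, n, m => if m = n then 1 else 0
  | (t+1), n, m => ∑ l ∈ Finset.range (M+1), Qk M A t n l * chainStep M A l m

section Qlemmas

variable {M A : ℕ} (hAM : A ≤ M) (hM : 0 < M)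

lemma sum_split {M : ℕ} (hM : 0 < M) (f : ℕ → ℝ) :
    ∑ m ∈ range (M+1), f m = f 0 + (∑ m ∈ Finset.Ico 1 M, f m) + f M := by
  have h1 : range (M+1) = Finset.Ico 0 (M+1) := by
    rw [Finset.range_eq_Ico]
  rw [h1, Finset.sum_Ico_succ_top (Nat.zero_le M),
    Finset.sum_eq_sum_Ico_succ_bot hM]

include hAM hM in
lemma Q_nonneg : ∀ (t n m : ℕ), n ≤ M → 0 ≤ Qk M A t n m := by
  intro t
  induction t with
  | zero => intro n m _; unfold Qk; split <;> norm_num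
  | succ t ih =>
    intro n m hn
    unfold Qk
    refine Finset.sum_nonneg fun l hl => ?_
    have hlM : l ≤ M := by simpa [Nat.lt_succ_iff] using Finset.mem_range.mp hl
    exact mul_nonneg (ih n l hn) (cs_nonneg hlM hM A m)

include hAM hM in
lemma Q_gt : ∀ (t n m : ℕ), n ≤ M → M < m → Qk M A t n m = 0 := by
  intro t
  induction t with
  | zero => intro n m hn hm; unfold Qk; rw [if_neg (by omega)]
  | succ t _ =>
    intro n m hn hm
    unfold Qk
    exact Finset.sum_eq_zero fun l _ => by rw [cs_gt hAM hm, mul_zero]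

include hAM hM in
lemma Q_sum : ∀ (t n : ℕ), n ≤ M → ∑ m ∈ range (M+1), Qk M A t n m = 1 := by
  intro t
  induction t with
  | zero =>
    intro n hn
    unfold Qk
    rw [Finset.sum_ite_eq' (range (M+1)) n (fun _ => (1:ℝ)),
      if_pos (Finset.mem_range.mpr (by omega))]
  | succ t ih =>
    intro n hn
    unfold Qk
    rw [Finset.sum_comm]
    calc ∑ l ∈ range (M+1), ∑ m ∈ range (M+1), Qk M A t n l * chainStep M A l m
        = ∑ l ∈ range (M+1), Qk M A t n l * ∑ m ∈ range (M+1), chainStep M A l m := by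
          exact Finset.sum_congr rfl fun l _ => (Finset.mul_sum _ _ _).symm
      _ = ∑ l ∈ range (M+1), Qk M A t n l := by
          refine Finset.sum_congr rfl fun l hl => ?_
          have hlM : l ≤ M := by simpa [Nat.lt_succ_iff] using Finset.mem_range.mp hl
          rw [cs_sum hlM hAM hM, mul_one]
      _ = 1 := ih n hn

include hAM hM in
lemma Q_mean : ∀ (t n : ℕ), n ≤ M → ∑ m ∈ range (M+1), (m:ℝ) * Qk M A t n m = n := by
  intro t
  induction t with
  | zero =>
    intro n hn
    unfold Qk
    simp_rw [mul_ite, mul_one, mul_zero]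
    rw [Finset.sum_ite_eq' (range (M+1)) n (fun m => (m:ℝ)),
      if_pos (Finset.mem_range.mpr (by omega))]
  | succ t ih =>
    intro n hn
    unfold Qk
    calc ∑ m ∈ range (M+1), (m:ℝ) * ∑ l ∈ range (M+1), Qk M A t n l * chainStep M A l m
        = ∑ l ∈ range (M+1), Qk M A t n l * ∑ m ∈ range (M+1), (m:ℝ) * chainStep M A l m := by
          simp_rw [Finset.mul_sum]
          rw [Finset.sum_comm]
          refine Finset.sum_congr rfl fun l _ => Finset.sum_congr rfl fun m _ => by ring
      _ = ∑ l ∈ range (M+1), Qk M A t n l * (l:ℝ) := by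
          refine Finset.sum_congr rfl fun l hl => ?_
          have hlM : l ≤ M := by simpa [Nat.lt_succ_iff] using Finset.mem_range.mp hl
          rw [cs_mean hlM hAM hM]
      _ = ∑ l ∈ range (M+1), (l:ℝ) * Qk M A t n l :=
          Finset.sum_congr rfl fun l _ => by ring
      _ = n := ih n hn

include hAM hM in
lemma Q_abs0 : ∀ (t m : ℕ), Qk M A t 0 m = if m = 0 then 1 else 0 := by
  intro t
  induction t with
  | zero => intro m; rfl
  | succ t ih =>
    intro m
    unfold Qk
    simp_rw [ih]
    calc ∑ l ∈ range (M+1), (if l = 0 then (1:ℝ) else 0) * chainStep M A l m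
        = ∑ l ∈ range (M+1), (if l = 0 then chainStep M A 0 m else 0) := by
          refine Finset.sum_congr rfl fun l _ => ?_
          split
          · rename_i h; subst h; ring
          · ring
      _ = chainStep M A 0 m := by
          rw [Finset.sum_ite_eq' (range (M+1)) 0 (fun _ => chainStep M A 0 m),
            if_pos (Finset.mem_range.mpr (by omega))]
      _ = if m = 0 then 1 else 0 := cs_zero hAM m

include hAM hM in
lemma Q_absM : ∀ (t m : ℕ), Qk M A t M m = if m = M then 1 else 0 := by
  intro t
  induction t with
  | zero => intro m; rfl
  | succ t ih =>
    intro m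
    unfold Qk
    simp_rw [ih]
    calc ∑ l ∈ range (M+1), (if l = M then (1:ℝ) else 0) * chainStep M A l m
        = ∑ l ∈ range (M+1), (if l = M then chainStep M A M m else 0) := by
          refine Finset.sum_congr rfl fun l _ => ?_
          split
          · rename_i h; subst h; ring
          · ring
      _ = chainStep M A M m := by
          rw [Finset.sum_ite_eq' (range (M+1)) M (fun _ => chainStep M A M m),
            if_pos (Finset.mem_range.mpr (by omega))]
      _ = if m = M then 1 else 0 := cs_M hAM hM m

include hAM hM in
lemma Q_chapman : ∀ (s t n m : ℕ), n ≤ M →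
    Qk M A (t + s) n m = ∑ l ∈ range (M+1), Qk M A t n l * Qk M A s l m := by
  intro s
  induction s with
  | zero =>
    intro t n m hn
    show Qk M A t n m = ∑ l ∈ range (M+1), Qk M A t n l * (if m = l then 1 else 0)
    calc Qk M A t n m
        = if m ∈ range (M+1) then Qk M A t n m else 0 := by
          split
          · rfl
          · rename_i h
            rw [Q_gt hAM hM t n m hn (by simpa [Nat.lt_succ_iff] using h)]
      _ = ∑ l ∈ range (M+1), (if m = l then Qk M A t n l else 0) := by
          rw [Finset.sum_ite_eq (range (M+1)) m (fun l => Qk M A t n l)]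
      _ = ∑ l ∈ range (M+1), Qk M A t n l * (if m = l then 1 else 0) := by
          refine Finset.sum_congr rfl fun l _ => ?_
          split
          · ring
          · ring
  | succ s ih =>
    intro t n m hn
    show ∑ l' ∈ range (M+1), Qk M A (t + s) n l' * chainStep M A l' m = _
    calc ∑ l' ∈ range (M+1), Qk M A (t + s) n l' * chainStep M A l' m
        = ∑ l' ∈ range (M+1), (∑ l ∈ range (M+1), Qk M A t n l * Qk M A s l l') * chainStep M A l' m := by
          exact Finset.sum_congr rfl fun l' _ => by rw [ih t n l' hn]
      _ = ∑ l ∈ range (M+1), Qk M A t n l * ∑ l' ∈ range (M+1), Qk M A s l l' * chainStep M A l' m := by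
          simp_rw [Finset.sum_mul, Finset.mul_sum]
          rw [Finset.sum_comm]
          refine Finset.sum_congr rfl fun l _ => Finset.sum_congr rfl fun l' _ => by ring
      _ = ∑ l ∈ range (M+1), Qk M A t n l * Qk M A (s+1) l m := rfl

end Qlemmas

section Decay

variable {M A : ℕ} {c : ℝ} (hAM : A ≤ M) (hM2 : 2 ≤ M)
  (hc0 : 0 ≤ c) (hc1 : c ≤ 1)
  (hc : ∀ n, 1 ≤ n → n ≤ M - 1 → c ≤ chainStep M A n (n-1))

include hAM hM2 hc0 hc1 hc in
lemma Q_desc : ∀ (s n : ℕ), n ≤ M - 1 → n ≤ s → c ^ s ≤ Qk M A s n 0 := by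
  have hM : 0 < M := by omega
  intro s
  induction s with
  | zero =>
    intro n hn1 hn2
    interval_cases n
    unfold Qk
    norm_num
  | succ s ih =>
    intro n hn1 hn2
    rcases Nat.eq_zero_or_pos n with rfl | hn0
    · rw [Q_abs0 hAM hM (s+1) 0, if_pos rfl]
      exact pow_le_one₀ hc0 hc1
    · have key : Qk M A (s+1) n 0 = ∑ l ∈ range (M+1), chainStep M A n l * Qk M A s l 0 := by
        have h1 : Qk M A (1 + s) n 0 = ∑ l ∈ range (M+1), Qk M A 1 n l * Qk M A s l 0 :=
          Q_chapman hAM hM s 1 n 0 (by omega)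
        have h2 : ∀ l, Qk M A 1 n l = chainStep M A n l := by
          intro l
          show ∑ l' ∈ range (M+1), (if l' = n then (1:ℝ) else 0) * chainStep M A l' l = _
          calc ∑ l' ∈ range (M+1), (if l' = n then (1:ℝ) else 0) * chainStep M A l' l
              = ∑ l' ∈ range (M+1), (if l' = n then chainStep M A n l else 0) := by
                refine Finset.sum_congr rfl fun l' _ => ?_
                split
                · rename_i h; subst h; ring
                · ring
            _ = chainStep M A n l := by
                rw [Finset.sum_ite_eq' (range (M+1)) n (fun _ => chainStep M A n l),
                  if_pos (Finset.mem_range.mpr (by omega))]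
        rw [show 1 + s = s + 1 by ring] at h1
        rw [h1]
        exact Finset.sum_congr rfl fun l _ => by rw [h2 l]
      have hterm : c * c ^ s ≤ chainStep M A n (n-1) * Qk M A s (n-1) 0 := by
        have h1 : c ≤ chainStep M A n (n-1) := hc n hn0 hn1
        have h2 : c ^ s ≤ Qk M A s (n-1) 0 := ih (n-1) (by omega) (by omega)
        have h3 : 0 ≤ chainStep M A n (n-1) := cs_nonneg (by omega) hM A (n-1)
        exact mul_le_mul h1 h2 (pow_nonneg hc0 s) h3
      calc c ^ (s+1) = c * c ^ s := by ring
        _ ≤ chainStep M A n (n-1) * Qk M A s (n-1) 0 := hterm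
        _ ≤ ∑ l ∈ range (M+1), chainStep M A n l * Qk M A s l 0 := by
            refine Finset.single_le_sum (f := fun l => chainStep M A n l * Qk M A s l 0)
              (fun l hl => ?_) (Finset.mem_range.mpr (by omega))
            have hlM : l ≤ M := by simpa [Nat.lt_succ_iff] using Finset.mem_range.mp hl
            exact mul_nonneg (cs_nonneg (by omega) hM A l) (Q_nonneg hAM hM s l 0 hlM)
        _ = Qk M A (s+1) n 0 := key.symm

end Decay

noncomputable def Qint (M A t n : ℕ) : ℝ := ∑ m ∈ Finset.Ico 1 M, Qk M A t n m

section Interior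

variable {M A : ℕ} {c : ℝ} (hAM : A ≤ M) (hM2 : 2 ≤ M)
  (hc0 : 0 ≤ c) (hc1 : c ≤ 1)
  (hc : ∀ n, 1 ≤ n → n ≤ M - 1 → c ≤ chainStep M A n (n-1))

include hAM hM2 in
lemma Qint_nonneg {t n : ℕ} (hn : n ≤ M) : 0 ≤ Qint M A t n :=
  Finset.sum_nonneg fun m _ => Q_nonneg hAM (by omega) t n m hn

include hAM hM2 in
lemma Q_split {t n : ℕ} (hn : n ≤ M) :
    Qk M A t n 0 + Qint M A t n + Qk M A t n M = 1 := by
  have hM : 0 < M := by omega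
  have := sum_split hM (fun m => Qk M A t n m)
  rw [Q_sum hAM hM t n hn] at this
  unfold Qint
  linarith [this]

include hAM hM2 in
lemma Qint_le_one {t n : ℕ} (hn : n ≤ M) : Qint M A t n ≤ 1 := by
  have h := Q_split hAM hM2 (t := t) hn
  have h0 := Q_nonneg hAM (by omega : 0 < M) t n 0 hn
  have hMM := Q_nonneg hAM (by omega : 0 < M) t n M hn
  linarith

include hAM hM2 in
lemma Qint_abs0 (t : ℕ) : Qint M A t 0 = 0 := by
  unfold Qint
  refine Finset.sum_eq_zero fun m hm => ?_
  rw [Q_abs0 hAM (by omega) t m, if_neg]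
  have := Finset.mem_Ico.mp hm
  omega

include hAM hM2 in
lemma Qint_absM (t : ℕ) : Qint M A t M = 0 := by
  unfold Qint
  refine Finset.sum_eq_zero fun m hm => ?_
  rw [Q_absM hAM (by omega) t m, if_neg]
  have := Finset.mem_Ico.mp hm
  omega

include hAM hM2 hc0 hc1 hc in
lemma Qint_bound {n : ℕ} (hn1 : 1 ≤ n) (hn2 : n ≤ M - 1) :
    Qint M A (M-1) n ≤ 1 - c^(M-1) := by
  have hsplit := Q_split hAM hM2 (t := M-1) (n := n) (by omega)
  have hdesc := Q_desc hAM hM2 hc0 hc1 hc (M-1) n hn2 hn2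
  have hMM := Q_nonneg hAM (by omega : 0 < M) (M-1) n M (by omega)
  linarith

include hAM hM2 hc0 hc1 hc in
lemma Qint_decay {t k : ℕ} (hk : k ≤ M) :
    Qint M A (t + (M-1)) k ≤ (1 - c^(M-1)) * Qint M A t k := by
  have hM : 0 < M := by omega
  have hstep : Qint M A (t + (M-1)) k
      = ∑ l ∈ range (M+1), Qk M A t k l * Qint M A (M-1) l := by
    unfold Qint
    calc ∑ m ∈ Finset.Ico 1 M, Qk M A (t + (M-1)) k m
        = ∑ m ∈ Finset.Ico 1 M, ∑ l ∈ range (M+1), Qk M A t k l * Qk M A (M-1) l m :=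
          Finset.sum_congr rfl fun m _ => Q_chapman hAM hM (M-1) t k m hk
      _ = ∑ l ∈ range (M+1), ∑ m ∈ Finset.Ico 1 M, Qk M A t k l * Qk M A (M-1) l m :=
          Finset.sum_comm
      _ = ∑ l ∈ range (M+1), Qk M A t k l * ∑ m ∈ Finset.Ico 1 M, Qk M A (M-1) l m :=
          Finset.sum_congr rfl fun l _ => (Finset.mul_sum _ _ _).symm
  rw [hstep, sum_split hM (fun l => Qk M A t k l * Qint M A (M-1) l),
    Qint_abs0 hAM hM2, Qint_absM hAM hM2, mul_zero, mul_zero, add_zero, zero_add]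
  calc ∑ l ∈ Finset.Ico 1 M, Qk M A t k l * Qint M A (M-1) l
      ≤ ∑ l ∈ Finset.Ico 1 M, Qk M A t k l * (1 - c^(M-1)) := by
        refine Finset.sum_le_sum fun l hl => ?_
        have hl' := Finset.mem_Ico.mp hl
        refine mul_le_mul_of_nonneg_left ?_ (Q_nonneg hAM hM t k l hk)
        exact Qint_bound hAM hM2 hc0 hc1 hc (by omega) (by omega)
    _ = (1 - c^(M-1)) * Qint M A t k := by
        unfold Qint
        rw [Finset.mul_sum]
        exact Finset.sum_congr rfl fun l _ => by ring

include hAM hM2 hc0 hc1 hc in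
lemma Qint_pow {k : ℕ} (hk : k ≤ M) (s : ℕ) :
    Qint M A ((M-1)*s) k ≤ (1 - c^(M-1))^s := by
  induction s with
  | zero =>
    simpa using Qint_le_one hAM hM2 (t := (M-1)*0) hk
  | succ s ih =>
    have h1 : (M-1)*(s+1) = (M-1)*s + (M-1) := by ring
    rw [h1]
    calc Qint M A ((M-1)*s + (M-1)) k ≤ (1 - c^(M-1)) * Qint M A ((M-1)*s) k :=
          Qint_decay hAM hM2 hc0 hc1 hc hk
      _ ≤ (1 - c^(M-1)) * (1 - c^(M-1))^s := by
          refine mul_le_mul_of_nonneg_left ih ?_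
          have : c^(M-1) ≤ 1 := pow_le_one₀ hc0 hc1
          linarith
      _ = (1 - c^(M-1))^(s+1) := by ring

end Interior

section Bounds

variable {M A : ℕ} (hAM : A ≤ M) (hM2 : 2 ≤ M)

include hAM hM2 in
lemma Q0_mono {t k : ℕ} (hk : k ≤ M) : Qk M A t k 0 ≤ Qk M A (t+1) k 0 := by
  have hM : 0 < M := by omega
  show Qk M A t k 0 ≤ ∑ l ∈ range (M+1), Qk M A t k l * chainStep M A l 0
  have h0 : Qk M A t k 0 * chainStep M A 0 0 = Qk M A t k 0 := by
    rw [cs_zero hAM 0, if_pos rfl, mul_one]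
  rw [← h0]
  refine Finset.single_le_sum (f := fun l => Qk M A t k l * chainStep M A l 0)
    (fun l hl => ?_) (Finset.mem_range.mpr (by omega))
  have hlM : l ≤ M := by simpa [Nat.lt_succ_iff] using Finset.mem_range.mp hl
  exact mul_nonneg (Q_nonneg hAM hM t k l hk) (cs_nonneg hlM hM A 0)

include hAM hM2 in
lemma QM_le {t k : ℕ} (hk : k ≤ M) : Qk M A t k M ≤ (k:ℝ)/M := by
  have hM : 0 < M := by omega
  have hMR : (0:ℝ) < M := by exact_mod_cast hM
  have hmean := Q_mean hAM hM t k hk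
  have hterm : (M:ℝ) * Qk M A t k M ≤ ∑ m ∈ range (M+1), (m:ℝ) * Qk M A t k m := by
    refine Finset.single_le_sum (f := fun m' : ℕ => (m' : ℝ) * Qk M A t k m')
      (fun m' hm' => ?_) (Finset.mem_range.mpr (by omega))
    have hmM : m' ≤ M := by simpa [Nat.lt_succ_iff] using Finset.mem_range.mp hm'
    exact mul_nonneg (by positivity) (Q_nonneg hAM hM t k m' hk)
  rw [hmean] at hterm
  rw [le_div_iff₀ hMR]
  linarith

include hAM hM2 in
lemma Q0_le {t k : ℕ} (hk : k ≤ M) : Qk M A t k 0 ≤ 1 - (k:ℝ)/M := by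
  have hM : 0 < M := by omega
  have hMR : (0:ℝ) < M := by exact_mod_cast hM
  have hmean := Q_mean hAM hM t k hk
  have hsplit := Q_split hAM hM2 (t := t) hk
  have hbound : (k:ℝ) ≤ (M:ℝ) * (Qint M A t k + Qk M A t k M) := by
    rw [← hmean, sum_split hM (fun m => (m:ℝ) * Qk M A t k m)]
    push_cast
    have h1 : ∑ m ∈ Finset.Ico 1 M, (m:ℝ) * Qk M A t k m
        ≤ ∑ m ∈ Finset.Ico 1 M, (M:ℝ) * Qk M A t k m := by
      refine Finset.sum_le_sum fun m hm => ?_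
      have hm' := Finset.mem_Ico.mp hm
      refine mul_le_mul_of_nonneg_right ?_ (Q_nonneg hAM hM t k m hk)
      exact_mod_cast hm'.2.le
    have h2 : ∑ m ∈ Finset.Ico 1 M, (M:ℝ) * Qk M A t k m = (M:ℝ) * Qint M A t k := by
      unfold Qint
      rw [Finset.mul_sum]
    nlinarith [h1, h2]
  have hQint := Qint_nonneg hAM hM2 (t := t) hk
  have hQ0 := Q_nonneg hAM hM t k 0 hk
  have hfrac : (k:ℝ)/M ≤ Qint M A t k + Qk M A t k M := by
    rw [div_le_iff₀ hMR]
    nlinarith [hbound]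
  linarith

include hAM hM2 in
lemma Q0_ge {t k : ℕ} (hk : k ≤ M) :
    1 - (k:ℝ)/M - Qint M A t k ≤ Qk M A t k 0 := by
  have hsplit := Q_split hAM hM2 (t := t) hk
  have hQM := QM_le hAM hM2 (t := t) hk
  linarith

end Bounds

open MeasureTheory

section Meas

variable {Ω : Type*} [MeasurableSpace Ω] (ℙ : Measure Ω) [IsProbabilityMeasure ℙ]
  (M A : ℕ) (N : ℕ → Ω → ℕ) (hmeas : ∀ t, Measurable (N t))
  (hmarkov : ∀ (t : ℕ) (a : ℕ → ℕ) (m : ℕ),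
      ℙ {ω | (∀ i ≤ t, N i ω = a i) ∧ N (t + 1) ω = m} =
        ℙ {ω | ∀ i ≤ t, N i ω = a i} * ENNReal.ofReal (chainStep M A (a t) m))

include hmeas in
lemma meas_state (t n : ℕ) : MeasurableSet {ω | N t ω = n} :=
  hmeas t (measurableSet_singleton n)

include hmeas in
lemma meas_cyl (t : ℕ) (a : ℕ → ℕ) : MeasurableSet {ω | ∀ i ≤ t, N i ω = a i} := by
  have : {ω | ∀ i ≤ t, N i ω = a i} = ⋂ (i : ℕ) (_ : i ≤ t), {ω | N i ω = a i} := by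
    ext ω; simp
  rw [this]
  exact MeasurableSet.iInter fun i => MeasurableSet.iInter fun _ => meas_state N hmeas i (a i)

include hmeas hmarkov in
lemma one_step (t n m : ℕ) :
    ℙ {ω | N t ω = n ∧ N (t+1) ω = m}
      = ℙ {ω | N t ω = n} * ENNReal.ofReal (chainStep M A n m) := by
  classical
  set af : (Fin t → ℕ) → ℕ → ℕ := fun b i => if h : i < t then b ⟨i, h⟩ else n with haf
  set S : (Fin t → ℕ) → Set Ω := fun b => {ω | ∀ i ≤ t, N i ω = af b i} with hS
  have hat : ∀ b, af b t = n := fun b => dif_neg (lt_irrefl t)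
  have hUS : (⋃ b, S b) = {ω | N t ω = n} := by
    ext ω
    simp only [Set.mem_iUnion, Set.mem_setOf_eq, hS]
    constructor
    · rintro ⟨b, hb⟩
      have := hb t (le_refl t)
      rwa [hat b] at this
    · intro hω
      refine ⟨fun i => N i.1 ω, fun i hi => ?_⟩
      by_cases h : i < t
      · simp [haf, h]
      · have hit : i = t := by omega
        subst hit
        simp [haf, hω]
  have hdisj : Pairwise (Function.onFun Disjoint S) := by
    intro b b' hbb'
    rw [Function.onFun, Set.disjoint_left]
    intro ω hb hb'
    apply hbb'
    funext i
    have h1 := hb i.1 (le_of_lt i.2)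
    have h2 := hb' i.1 (le_of_lt i.2)
    rw [h1] at h2
    simp only [haf, dif_pos i.2] at h2
    exact (Fin.eta i i.2 ▸ h2 : _)
  have hSmeas : ∀ b, MeasurableSet (S b) := fun b => meas_cyl N hmeas t (af b)
  have hXmeas : MeasurableSet {ω | N (t+1) ω = m} := meas_state N hmeas (t+1) m
  have hdisj2 : Pairwise (Function.onFun Disjoint (fun b => S b ∩ {ω | N (t+1) ω = m})) := by
    intro b b' hbb'
    exact Set.disjoint_of_subset Set.inter_subset_left Set.inter_subset_left (hdisj hbb')
  have hstep : ∀ b, ℙ (S b ∩ {ω | N (t+1) ω = m}) = ℙ (S b) * ENNReal.ofReal (chainStep M A n m) := by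
    intro b
    have h := hmarkov t (af b) m
    rw [hat b] at h
    have : S b ∩ {ω | N (t+1) ω = m} = {ω | (∀ i ≤ t, N i ω = af b i) ∧ N (t + 1) ω = m} := by
      ext ω; simp [hS, Set.mem_inter_iff]
    rw [this, h]
  calc ℙ {ω | N t ω = n ∧ N (t+1) ω = m}
      = ℙ (⋃ b, S b ∩ {ω | N (t+1) ω = m}) := by
        congr 1
        rw [← Set.iUnion_inter, hUS]
        ext ω; simp [Set.mem_inter_iff]
    _ = ∑' b, ℙ (S b ∩ {ω | N (t+1) ω = m}) :=
        measure_iUnion hdisj2 fun b => (hSmeas b).inter hXmeas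
    _ = ∑' b, ℙ (S b) * ENNReal.ofReal (chainStep M A n m) := tsum_congr hstep
    _ = (∑' b, ℙ (S b)) * ENNReal.ofReal (chainStep M A n m) := ENNReal.tsum_mul_right
    _ = ℙ (⋃ b, S b) * ENNReal.ofReal (chainStep M A n m) := by
        rw [measure_iUnion hdisj hSmeas]
    _ = ℙ {ω | N t ω = n} * ENNReal.ofReal (chainStep M A n m) := by rw [hUS]

end Meas

section Meas2

variable {Ω : Type*} [MeasurableSpace Ω] (ℙ : Measure Ω) [IsProbabilityMeasure ℙ]
  (M A : ℕ) (hAM : A ≤ M) (hM2 : 2 ≤ M)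
  (N : ℕ → Ω → ℕ) (hmeas : ∀ t, Measurable (N t))
  (hmarkov : ∀ (t : ℕ) (a : ℕ → ℕ) (m : ℕ),
      ℙ {ω | (∀ i ≤ t, N i ω = a i) ∧ N (t + 1) ω = m} =
        ℙ {ω | ∀ i ≤ t, N i ω = a i} * ENNReal.ofReal (chainStep M A (a t) m))
  (k : ℕ) (hk : k ≤ M) (hinit : ℙ {ω | N 0 ω = k} = 1)

include hAM hM2 hmeas hmarkov hk hinit in
lemma dist_eq : ∀ (t n : ℕ), ℙ {ω | N t ω = n} = ENNReal.ofReal (Qk M A t k n) := by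
  have hM : 0 < M := by omega
  intro t
  induction t with
  | zero =>
    intro n
    show ℙ {ω | N 0 ω = n} = ENNReal.ofReal (if n = k then 1 else 0)
    rcases eq_or_ne n k with rfl | hne
    · rw [if_pos rfl, hinit, ENNReal.ofReal_one]
    · rw [if_neg hne, ENNReal.ofReal_zero]
      have hsub : {ω | N 0 ω = n} ⊆ {ω | N 0 ω = k}ᶜ := by
        intro ω hω hω'
        exact hne (hω ▸ hω' ▸ rfl)
      refine le_antisymm (le_trans (measure_mono hsub) ?_) zero_le
      rw [prob_compl_eq_one_sub (meas_state N hmeas 0 k), hinit]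
      simp
  | succ t ih =>
    intro m
    have hdecomp : {ω | N (t+1) ω = m} = ⋃ n : ℕ, {ω | N t ω = n ∧ N (t+1) ω = m} := by
      ext ω
      simp only [Set.mem_iUnion, Set.mem_setOf_eq]
      exact ⟨fun h => ⟨N t ω, rfl, h⟩, fun ⟨n, _, h⟩ => h⟩
    have hdisj : Pairwise (Function.onFun Disjoint
        (fun n : ℕ => {ω | N t ω = n ∧ N (t+1) ω = m})) := by
      intro n n' hnn'
      rw [Function.onFun, Set.disjoint_left]
      rintro ω ⟨h1, _⟩ ⟨h2, _⟩
      exact hnn' (h1 ▸ h2 ▸ rfl)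
    have hmeas2 : ∀ n : ℕ, MeasurableSet {ω | N t ω = n ∧ N (t+1) ω = m} := by
      intro n
      have : {ω | N t ω = n ∧ N (t+1) ω = m} = {ω | N t ω = n} ∩ {ω | N (t+1) ω = m} := rfl
      rw [this]
      exact (meas_state N hmeas t n).inter (meas_state N hmeas (t+1) m)
    rw [hdecomp, measure_iUnion hdisj hmeas2]
    have hterm : ∀ n : ℕ, ℙ {ω | N t ω = n ∧ N (t+1) ω = m}
        = ENNReal.ofReal (Qk M A t k n * chainStep M A n m) := by
      intro n
      rw [one_step ℙ M A N hmeas hmarkov t n m, ih n]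
      rcases le_or_gt n M with hn | hn
      · rw [ENNReal.ofReal_mul (Q_nonneg hAM hM t k n hk)]
      · rw [Q_gt hAM hM t k n hk hn]
        simp
    rw [tsum_congr hterm]
    have hvanish : ∀ n ∉ range (M+1), ENNReal.ofReal (Qk M A t k n * chainStep M A n m) = 0 := by
      intro n hn
      have hn' : M < n := by simpa [Nat.lt_succ_iff] using hn
      rw [Q_gt hAM hM t k n hk hn', zero_mul, ENNReal.ofReal_zero]
    rw [tsum_eq_sum hvanish, ← ENNReal.ofReal_sum_of_nonneg]
    · rfl
    · intro n hn
      have hnM : n ≤ M := by simpa [Nat.lt_succ_iff] using Finset.mem_range.mp hn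
      exact mul_nonneg (Q_nonneg hAM hM t k n hk) (cs_nonneg hnM hM A m)

end Meas2

section Meas3

variable {Ω : Type*} [MeasurableSpace Ω] (ℙ : Measure Ω) [IsProbabilityMeasure ℙ]
  (M A : ℕ)
  (N : ℕ → Ω → ℕ) (hmeas : ∀ t, Measurable (N t))
  (hmarkov : ∀ (t : ℕ) (a : ℕ → ℕ) (m : ℕ),
      ℙ {ω | (∀ i ≤ t, N i ω = a i) ∧ N (t + 1) ω = m} =
        ℙ {ω | ∀ i ≤ t, N i ω = a i} * ENNReal.ofReal (chainStep M A (a t) m))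

include hmeas hmarkov in
lemma escape_null (z : ℕ) (hz : ∀ m, m ≠ z → chainStep M A z m = 0) (t : ℕ) :
    ℙ {ω | N t ω = z ∧ N (t+1) ω ≠ z} = 0 := by
  classical
  set U : ℕ → Set Ω := fun m => if m = z then ∅ else {ω | N t ω = z ∧ N (t+1) ω = m} with hU
  have hsub : {ω | N t ω = z ∧ N (t+1) ω ≠ z} ⊆ ⋃ m, U m := by
    rintro ω ⟨h1, h2⟩
    refine Set.mem_iUnion.mpr ⟨N (t+1) ω, ?_⟩
    rw [hU]
    simp only [if_neg h2]
    exact ⟨h1, rfl⟩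
  have hzero : ∀ m, ℙ (U m) = 0 := by
    intro m
    rw [hU]
    simp only []
    rcases eq_or_ne m z with rfl | hm
    · simp
    · rw [if_neg hm]
      rw [one_step ℙ M A N hmeas hmarkov t z m, hz m hm, ENNReal.ofReal_zero, mul_zero]
  refine le_antisymm (le_trans (measure_mono hsub) ?_) zero_le
  calc ℙ (⋃ m, U m) ≤ ∑' m, ℙ (U m) := measure_iUnion_le U
    _ = 0 := by simp [hzero]

end Meas3

open MeasureTheory in
/-- Suppose `0 < α ≤ 1`. For the mixed-environment count chain the
states `0` and `M` are absorbing; letting `τ = inf {t ≥ 0 : n(t) ∈ {0, M}}`, one has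
`τ < ∞` almost surely, and for every starting state `k ∈ {0,…,M}`,
`P(n(τ) = 0 | n(0) = k) = 1 − k/M`.  In particular the extinction probability does not
depend on `α`.

The chain is formalised as a process `N : ℕ → Ω → ℕ` on a probability space whose
one-step law, given the whole past, is `chainStep M A (current state)` (the Markov
property `hmarkov`), started from `k` (`hinit`). -/
theorem absorption_and_extinction_probability
    {Ω : Type*} [MeasurableSpace Ω] (ℙ : Measure Ω) [IsProbabilityMeasure ℙ]
    (M A : ℕ) (α : ℝ) (hM : 2 ≤ M) (hAM : A ≤ M)
    (hα : (A : ℝ) = α * M) (hα0 : 0 < α) (hα1 : α ≤ 1)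
    (N : ℕ → Ω → ℕ) (hmeas : ∀ t, Measurable (N t))
    (hmarkov : ∀ (t : ℕ) (a : ℕ → ℕ) (m : ℕ),
      ℙ {ω | (∀ i ≤ t, N i ω = a i) ∧ N (t + 1) ω = m} =
        ℙ {ω | ∀ i ≤ t, N i ω = a i} * ENNReal.ofReal (chainStep M A (a t) m))
    (k : ℕ) (hk : k ≤ M) (hinit : ℙ {ω | N 0 ω = k} = 1) :
    (∀ m : ℕ, chainStep M A 0 m = if m = 0 then 1 else 0) ∧
    (∀ m : ℕ, chainStep M A M m = if m = M then 1 else 0) ∧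
    ℙ {ω | ∃ t, N t ω = 0 ∨ N t ω = M} = 1 ∧
    ℙ {ω | (∃ t, N t ω = 0 ∨ N t ω = M) ∧
          N (sInf {t | N t ω = 0 ∨ N t ω = M}) ω = 0} =
      ENNReal.ofReal (1 - (k : ℝ) / (M : ℝ)) := by
  classical
  have hM0 : 0 < M := by omega
  have hMR : (0:ℝ) < M := by exact_mod_cast hM0
  have hA1 : 1 ≤ A := by
    rcases Nat.eq_zero_or_pos A with rfl | h
    · exfalso
      rw [Nat.cast_zero] at hα
      nlinarith [mul_pos hα0 hMR]
    · exact h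
  -- the minimal one-step-down probability
  have hne : (Finset.Icc 1 (M-1)).Nonempty := ⟨1, Finset.mem_Icc.mpr ⟨le_refl 1, by omega⟩⟩
  set c : ℝ := (Finset.Icc 1 (M-1)).inf' hne (fun n => chainStep M A n (n-1)) with hcdef
  have hc : ∀ n, 1 ≤ n → n ≤ M - 1 → c ≤ chainStep M A n (n-1) := fun n h1 h2 =>
    Finset.inf'_le _ (Finset.mem_Icc.mpr ⟨h1, h2⟩)
  have hcpos : 0 < c := by
    rw [hcdef, Finset.lt_inf'_iff]
    intro n hn
    have h := Finset.mem_Icc.mp hn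
    exact cs_down hA1 hAM h.1 h.2 hM
  have hc1 : c ≤ 1 := le_trans (hc 1 le_rfl (by omega)) (cs_le_one (by omega) hAM hM0)
  set θ : ℝ := 1 - c ^ (M-1) with hθdef
  have hδpos : 0 < c ^ (M-1) := pow_pos hcpos _
  have hδ1 : c ^ (M-1) ≤ 1 := pow_le_one₀ hcpos.le hc1
  have hθ0 : 0 ≤ θ := by rw [hθdef]; linarith
  have hθlt : θ < 1 := by rw [hθdef]; linarith
  have hθtend : Filter.Tendsto (fun s => θ ^ s) Filter.atTop (nhds 0) :=
    tendsto_pow_atTop_nhds_zero_of_lt_one hθ0 hθlt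
  have hdist := dist_eq ℙ M A hAM hM N hmeas hmarkov k hk hinit
  have hQintpow : ∀ s : ℕ, Qint M A ((M-1)*s) k ≤ θ ^ s := by
    intro s
    rw [hθdef]
    exact Qint_pow hAM hM hcpos.le hc1 hc hk s
  -- the a.s. absorbing event
  have hgoodmeas : ∀ t : ℕ, MeasurableSet
      {ω | (N t ω = 0 → N (t+1) ω = 0) ∧ (N t ω = M → N (t+1) ω = M)} := by
    intro t
    have h1 : {ω | (N t ω = 0 → N (t+1) ω = 0) ∧ (N t ω = M → N (t+1) ω = M)}
        = ({ω | N t ω = 0}ᶜ ∪ {ω | N (t+1) ω = 0}) ∩ ({ω | N t ω = M}ᶜ ∪ {ω | N (t+1) ω = M}) := by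
      ext ω
      simp only [Set.mem_inter_iff, Set.mem_union, Set.mem_compl_iff, Set.mem_setOf_eq]
      constructor
      · rintro ⟨h1, h2⟩
        constructor
        · by_cases h : N t ω = 0
          · exact Or.inr (h1 h)
          · exact Or.inl h
        · by_cases h : N t ω = M
          · exact Or.inr (h2 h)
          · exact Or.inl h
      · rintro ⟨h1, h2⟩
        constructor
        · intro h; rcases h1 with h' | h'; exact absurd h h'; exact h'
        · intro h; rcases h2 with h' | h'; exact absurd h h'; exact h'
    rw [h1]
    exact ((meas_state N hmeas t 0).compl.union (meas_state N hmeas (t+1) 0)).inter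
      ((meas_state N hmeas t M).compl.union (meas_state N hmeas (t+1) M))
  set G : Set Ω := ⋂ t, {ω | (N t ω = 0 → N (t+1) ω = 0) ∧ (N t ω = M → N (t+1) ω = M)}
    with hGdef
  have hGc : ℙ Gᶜ = 0 := by
    rw [hGdef, Set.compl_iInter]
    refine le_antisymm (le_trans (measure_iUnion_le _) ?_) zero_le
    have h2 : ∀ t : ℕ, ℙ ({ω | (N t ω = 0 → N (t+1) ω = 0) ∧ (N t ω = M → N (t+1) ω = M)}ᶜ) = 0 := by
      intro t
      have hsub : {ω | (N t ω = 0 → N (t+1) ω = 0) ∧ (N t ω = M → N (t+1) ω = M)}ᶜ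
          ⊆ {ω | N t ω = 0 ∧ N (t+1) ω ≠ 0} ∪ {ω | N t ω = M ∧ N (t+1) ω ≠ M} := by
        intro ω hω
        simp only [Set.mem_compl_iff, Set.mem_setOf_eq, not_and_or, Classical.not_imp] at hω
        rcases hω with h | h
        · exact Or.inl h
        · exact Or.inr h
      refine le_antisymm (le_trans (measure_mono hsub) (le_trans (measure_union_le _ _) ?_)) zero_le
      rw [escape_null ℙ M A N hmeas hmarkov 0 (fun m hm => by rw [cs_zero hAM m, if_neg hm]) t,
        escape_null ℙ M A N hmeas hmarkov M (fun m hm => by rw [cs_M hAM hM0 m, if_neg hm]) t]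
      simp
    simp [h2]
  have hinter : ∀ X : Set Ω, ℙ (X ∩ G) = ℙ X := by
    intro X
    refine le_antisymm (measure_mono Set.inter_subset_left) ?_
    calc ℙ X ≤ ℙ (X ∩ G) + ℙ (X \ G) := measure_le_inter_add_diff ℙ X G
      _ ≤ ℙ (X ∩ G) + ℙ Gᶜ := add_le_add_right (measure_mono fun ω hω => hω.2) _
      _ = ℙ (X ∩ G) := by rw [hGc, add_zero]
  have hprop0 : ∀ ω, ω ∈ G → ∀ s u, s ≤ u → N s ω = 0 → N u ω = 0 := by
    intro ω hω s u hsu h0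
    induction u, hsu using Nat.le_induction with
    | base => exact h0
    | succ u hsu ih => exact (Set.mem_iInter.mp hω u).1 ih
  have hpropM : ∀ ω, ω ∈ G → ∀ s u, s ≤ u → N s ω = M → N u ω = M := by
    intro ω hω s u hsu h0
    induction u, hsu using Nat.le_induction with
    | base => exact h0
    | succ u hsu ih => exact (Set.mem_iInter.mp hω u).2 ih
  -- measure of the union at a fixed time
  have habsT : ∀ T : ℕ, ℙ ({ω | N T ω = 0} ∪ {ω | N T ω = M})
      = ENNReal.ofReal (Qk M A T k 0) + ENNReal.ofReal (Qk M A T k M) := by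
    intro T
    rw [measure_union (Set.disjoint_left.mpr fun ω h1 h2 => by
        simp only [Set.mem_setOf_eq] at h1 h2
        omega) (meas_state N hmeas T M), hdist T 0, hdist T M]
  -- conjunct 3
  have hEc : ∀ s : ℕ, ℙ ({ω | ∃ t, N t ω = 0 ∨ N t ω = M}ᶜ) ≤ ENNReal.ofReal (θ ^ s) := by
    intro s
    set T := (M-1)*s with hT
    have hsub : {ω | ∃ t, N t ω = 0 ∨ N t ω = M}ᶜ ⊆ ({ω | N T ω = 0} ∪ {ω | N T ω = M})ᶜ := by
      intro ω hω
      simp only [Set.mem_compl_iff, Set.mem_setOf_eq, not_exists, Set.mem_union, not_or] at hω ⊢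
      exact ⟨(hω T).1, (hω T).2⟩
    calc ℙ ({ω | ∃ t, N t ω = 0 ∨ N t ω = M}ᶜ) ≤ ℙ (({ω | N T ω = 0} ∪ {ω | N T ω = M})ᶜ) :=
          measure_mono hsub
      _ = 1 - ℙ ({ω | N T ω = 0} ∪ {ω | N T ω = M}) :=
          prob_compl_eq_one_sub ((meas_state N hmeas T 0).union (meas_state N hmeas T M))
      _ ≤ ENNReal.ofReal (θ ^ s) := by
          rw [habsT T, tsub_le_iff_right]
          have hsplit := Q_split hAM hM (t := T) hk
          calc (1:ENNReal) = ENNReal.ofReal (Qk M A T k 0 + Qint M A T k + Qk M A T k M) := by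
                rw [hsplit, ENNReal.ofReal_one]
            _ ≤ ENNReal.ofReal (Qk M A T k 0 + Qint M A T k) + ENNReal.ofReal (Qk M A T k M) :=
                ENNReal.ofReal_add_le
            _ ≤ (ENNReal.ofReal (Qk M A T k 0) + ENNReal.ofReal (Qint M A T k))
                + ENNReal.ofReal (Qk M A T k M) :=
                add_le_add_left ENNReal.ofReal_add_le _
            _ ≤ (ENNReal.ofReal (Qk M A T k 0) + ENNReal.ofReal (θ ^ s))
                + ENNReal.ofReal (Qk M A T k M) := by
                refine add_le_add_left (add_le_add_right (ENNReal.ofReal_le_ofReal ?_) _) _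
                exact hQintpow s
            _ = ENNReal.ofReal (θ ^ s)
                + (ENNReal.ofReal (Qk M A T k 0) + ENNReal.ofReal (Qk M A T k M)) := by ring
  have hEcompl : ℙ ({ω | ∃ t, N t ω = 0 ∨ N t ω = M}ᶜ) = 0 := by
    refine le_antisymm ?_ zero_le
    have htend2 : Filter.Tendsto (fun s => ENNReal.ofReal (θ ^ s)) Filter.atTop (nhds 0) := by
      have h := ENNReal.tendsto_ofReal hθtend
      simpa using h
    exact ge_of_tendsto htend2 (Filter.Eventually.of_forall hEc)
  have hE1 : ℙ {ω | ∃ t, N t ω = 0 ∨ N t ω = M} = 1 := by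
    refine le_antisymm prob_le_one ?_
    calc (1:ENNReal) = ℙ ({ω | ∃ t, N t ω = 0 ∨ N t ω = M} ∪ {ω | ∃ t, N t ω = 0 ∨ N t ω = M}ᶜ) := by
          rw [Set.union_compl_self, measure_univ]
      _ ≤ ℙ {ω | ∃ t, N t ω = 0 ∨ N t ω = M} + ℙ ({ω | ∃ t, N t ω = 0 ∨ N t ω = M}ᶜ) :=
          measure_union_le _ _
      _ = ℙ {ω | ∃ t, N t ω = 0 ∨ N t ω = M} := by rw [hEcompl, add_zero]
  -- conjunct 4
  have hE4F : {ω | (∃ t, N t ω = 0 ∨ N t ω = M) ∧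
      N (sInf {t | N t ω = 0 ∨ N t ω = M}) ω = 0} ∩ G = (⋃ T, {ω | N T ω = 0}) ∩ G := by
    ext ω
    simp only [Set.mem_inter_iff, Set.mem_setOf_eq, Set.mem_iUnion]
    constructor
    · rintro ⟨⟨hex, hτ⟩, hG⟩
      exact ⟨⟨sInf {t | N t ω = 0 ∨ N t ω = M}, hτ⟩, hG⟩
    · rintro ⟨⟨T, hT⟩, hG⟩
      refine ⟨⟨⟨T, Or.inl hT⟩, ?_⟩, hG⟩
      have hSne : sInf {t | N t ω = 0 ∨ N t ω = M} ∈ {t | N t ω = 0 ∨ N t ω = M} :=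
        Nat.sInf_mem ⟨T, Or.inl hT⟩
      have hτT : sInf {t | N t ω = 0 ∨ N t ω = M} ≤ T := Nat.sInf_le (Or.inl hT)
      rcases hSne with h | h
      · exact h
      · exfalso
        have := hpropM ω hG _ T hτT h
        omega
  set D : ℕ → Set Ω := fun T => {ω | N T ω = 0} ∩ G with hDdef
  have hDmono : Monotone D :=
    monotone_nat_of_le_succ (fun T ω hω => ⟨(Set.mem_iInter.mp hω.2 T).1 hω.1, hω.2⟩)
  have hPDT : ∀ T, ℙ (D T) = ENNReal.ofReal (Qk M A T k 0) := fun T => by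
    rw [hDdef]
    exact (hinter _).trans (hdist T 0)
  have hPF : ℙ (⋃ T, {ω | N T ω = 0}) = ⨆ T, ENNReal.ofReal (Qk M A T k 0) := by
    rw [← hinter (⋃ T, {ω | N T ω = 0}), Set.iUnion_inter, hDmono.measure_iUnion]
    exact iSup_congr hPDT
  have hsup : (⨆ T, ENNReal.ofReal (Qk M A T k 0)) = ENNReal.ofReal (1 - (k:ℝ)/M) := by
    refine le_antisymm (iSup_le fun T => ENNReal.ofReal_le_ofReal (Q0_le hAM hM hk)) ?_
    have htend3 : Filter.Tendsto (fun s => ENNReal.ofReal (1 - (k:ℝ)/M - θ^s)) Filter.atTop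
        (nhds (ENNReal.ofReal (1 - (k:ℝ)/M))) := by
      refine ENNReal.tendsto_ofReal ?_
      have h := Filter.Tendsto.sub (tendsto_const_nhds (x := (1 - (k:ℝ)/M))
        (f := Filter.atTop)) hθtend
      simpa using h
    refine le_of_tendsto htend3 (Filter.Eventually.of_forall fun s => ?_)
    calc ENNReal.ofReal (1 - (k:ℝ)/M - θ^s)
        ≤ ENNReal.ofReal (Qk M A ((M-1)*s) k 0) := by
          refine ENNReal.ofReal_le_ofReal ?_
          have h1 := Q0_ge hAM hM (t := (M-1)*s) hk
          have h2 := hQintpow s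
          linarith
      _ ≤ ⨆ T, ENNReal.ofReal (Qk M A T k 0) :=
          le_iSup (fun T => ENNReal.ofReal (Qk M A T k 0)) ((M-1)*s)
  refine ⟨cs_zero hAM, cs_M hAM hM0, hE1, ?_⟩
  rw [← hinter {ω | (∃ t, N t ω = 0 ∨ N t ω = M) ∧
      N (sInf {t | N t ω = 0 ∨ N t ω = M}) ω = 0}, hE4F, hinter, hPF, hsup]
end

section
/- Let ρ be an n-gram distribution with L(c) > 0 for every context c ∈ Σ^{n−1}. Define π(c) = L(c), p(a | c) = ρ(c·a)/L(c), and the context transition kernel K_p(c, c') = Σ_{a : σ(c,a) = c'} p(a | c). Then π is a stationary distribution of K_p (i.e., Σ_c π(c) K_p(c, c') = π(c') for all c') if and only if ρ satisfies flow balance; and in that case π(c)·p(a | c) = ρ(c·a) for all c and a, so the rollout of the induced continuation law reproduces ρ. -/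
/-!
`n`-gram distributions and flow balance on the de Bruijn graph.

We fix a finite alphabet `σ` with `s = |σ| ≥ 2` and an order `n = k + 1 ≥ 2`
(so contexts have length `k = n − 1 ≥ 1`).  An `n`-gram is a function
`Fin (k+1) → σ`; a context is a function `Fin k → σ`.  For an `n`-gram `g`,
`gInit g` is its length-`k` prefix (the source vertex of the corresponding
de Bruijn edge) and `gTail g` its length-`k` suffix (the target vertex).
The `n`-gram `c·a` is `Fin.snoc c a` and `x·c` is `Fin.cons x c`; the shift
`σ(c,a)` is `gTail (Fin.snoc c a)`.
-/

open Finset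

variable {σ : Type*}

/-- Length-`k` prefix of an `n`-gram (`n = k+1`): the source vertex of the edge. -/
def gInit {k : ℕ} (g : Fin (k + 1) → σ) : Fin k → σ := fun i => g i.castSucc

/-- Length-`k` suffix of an `n`-gram: the target vertex of the edge; also the
shift map, `σ(c,a) = gTail (Fin.snoc c a)`. -/
def gTail {k : ℕ} (g : Fin (k + 1) → σ) : Fin k → σ := fun i => g i.succ

/-- An `n`-gram distribution: nonnegative and summing to `1`. -/
def IsDist [Fintype σ] [DecidableEq σ] {k : ℕ} (ρ : (Fin (k + 1) → σ) → ℝ) : Prop :=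
  (∀ g, 0 ≤ ρ g) ∧ ∑ g, ρ g = 1

/-- `L(c) = Σ_a ρ(c·a)`: mass of `n`-grams beginning with context `c`. -/
def Lmass [Fintype σ] [DecidableEq σ] {k : ℕ}
    (ρ : (Fin (k + 1) → σ) → ℝ) (c : Fin k → σ) : ℝ :=
  ∑ a, ρ (Fin.snoc c a)

/-- `R(c) = Σ_x ρ(x·c)`: mass of `n`-grams ending with context `c`. -/
def Rmass [Fintype σ] [DecidableEq σ] {k : ℕ}
    (ρ : (Fin (k + 1) → σ) → ℝ) (c : Fin k → σ) : ℝ :=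
  ∑ x, ρ (Fin.cons x c)

/-- Flow balance: `L(c) = R(c)` for every context `c`. -/
def FlowBalance [Fintype σ] [DecidableEq σ] {k : ℕ}
    (ρ : (Fin (k + 1) → σ) → ℝ) : Prop :=
  ∀ c, Lmass ρ c = Rmass ρ c

/-- The polytope `F_n` of `n`-gram distributions satisfying flow balance
(the circulation polytope of the de Bruijn graph `B(n−1,s)`). -/
def FlowPolytope (σ : Type*) [Fintype σ] [DecidableEq σ] (k : ℕ) :
    Set ((Fin (k + 1) → σ) → ℝ) :=
  {ρ | IsDist ρ ∧ FlowBalance ρ}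

/-- A simple directed cycle in the de Bruijn graph `B(n−1,s)`: a cyclically ordered
list of `p ≥ 1` edges (`n`-grams) whose sources are pairwise distinct vertices and in
which the target of each edge is the source of the next. -/
structure SimpleCycle (σ : Type*) (k : ℕ) where
  /-- number of edges (`n`-grams) traversed -/
  p : ℕ
  ppos : 0 < p
  /-- the traversed edges, in cyclic order -/
  edge : Fin p → (Fin (k + 1) → σ)
  /-- the cycle is simple: visited vertices are pairwise distinct -/
  simple : Function.Injective fun i => gInit (edge i)
  /-- consecutive edges are incident head-to-tail (cyclically) -/
  cyc : ∀ i : Fin p,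
    gTail (edge i) = gInit (edge ⟨(i.val + 1) % p, Nat.mod_lt _ i.pos⟩)

attribute [local instance] Classical.propDecidable

/-- The cycle flow `f_γ`: the uniform distribution assigning mass `1/p` to each of the
`p` `n`-grams traversed by the simple cycle `γ`, and `0` to all others. -/
noncomputable def cycleFlow {σ : Type*} {k : ℕ} (γ : SimpleCycle σ k) :
    (Fin (k + 1) → σ) → ℝ :=
  fun g => if g ∈ Set.range γ.edge then 1 / (γ.p : ℝ) else 0

/-- The induced continuation law `p(a | c) = ρ(c·a) / L(c)`. -/
noncomputable def contLaw [Fintype σ] [DecidableEq σ] {k : ℕ}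
    (ρ : (Fin (k + 1) → σ) → ℝ) (a : σ) (c : Fin k → σ) : ℝ :=
  ρ (Fin.snoc c a) / Lmass ρ c

/-- The context transition kernel `K_p(c, c') = Σ_{a : σ(c,a) = c'} p(a | c)`. -/
noncomputable def ctxKernel [Fintype σ] [DecidableEq σ] {k : ℕ}
    (ρ : (Fin (k + 1) → σ) → ℝ) (c c' : Fin k → σ) : ℝ :=
  ∑ a, if gTail (Fin.snoc c a) = c' then contLaw ρ a c else 0

private lemma sum_snoc_aux {σ : Type*} [Fintype σ] [DecidableEq σ] {k : ℕ}
    (F : (Fin (k+1) → σ) → ℝ) :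
    ∑ c : Fin k → σ, ∑ a : σ, F (Fin.snoc c a) = ∑ g, F g := by
  rw [← (Fin.snocEquiv (fun _ => σ)).sum_comp F]
  rw [Fintype.sum_prod_type, Finset.sum_comm]
  rfl

private lemma sum_tail_aux {σ : Type*} [Fintype σ] [DecidableEq σ] {k : ℕ}
    (ρ : (Fin (k+1) → σ) → ℝ) (c' : Fin k → σ) :
    ∑ g, (if gTail g = c' then ρ g else 0) = Rmass ρ c' := by
  rw [← (Fin.consEquiv (fun _ => σ)).sum_comp]
  rw [Fintype.sum_prod_type]
  simp only [Fin.consEquiv, Equiv.coe_fn_mk]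
  have : ∀ x (t : Fin k → σ), gTail (Fin.cons x t) = t := by
    intro x t; funext i; simp [gTail]
  simp only [this]
  rw [Rmass]
  congr 1; funext x
  rw [Finset.sum_ite_eq' _ c']
  simp

/-- Let `ρ` be an `n`-gram distribution with `L(c) > 0` for every
context `c`.  With `π(c) = L(c)`, `p(a|c) = ρ(c·a)/L(c)` and the context kernel
`K_p(c,c') = Σ_{a : σ(c,a) = c'} p(a|c)`: the distribution `π` is stationary for `K_p`
if and only if `ρ` satisfies flow balance; and in that case
`π(c)·p(a|c) = ρ(c·a)` for all `c, a`, so the rollout of the induced continuation law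
reproduces `ρ`. -/
theorem stationary_iff_flowBalance [Fintype σ] [DecidableEq σ]
    (k : ℕ) (hk : 1 ≤ k) (hs : 2 ≤ Fintype.card σ)
    (ρ : (Fin (k + 1) → σ) → ℝ) (hρ : IsDist ρ)
    (hL : ∀ c, 0 < Lmass ρ c) :
    ((∀ c', ∑ c, Lmass ρ c * ctxKernel ρ c c' = Lmass ρ c') ↔ FlowBalance ρ) ∧
    (FlowBalance ρ →
      ∀ (c : Fin k → σ) (a : σ), Lmass ρ c * contLaw ρ a c = ρ (Fin.snoc c a)) := by
  have hmul : ∀ (c : Fin k → σ) (a : σ), Lmass ρ c * contLaw ρ a c = ρ (Fin.snoc c a) := by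
    intro c a
    rw [contLaw, mul_div_cancel₀ _ (hL c).ne']
  refine ⟨?_, fun _ => hmul⟩
  have key : ∀ c', ∑ c, Lmass ρ c * ctxKernel ρ c c' = Rmass ρ c' := by
    intro c'
    have h1 : ∀ c, Lmass ρ c * ctxKernel ρ c c'
        = ∑ a, (if gTail (Fin.snoc c a) = c' then ρ (Fin.snoc c a) else 0) := by
      intro c
      rw [ctxKernel, Finset.mul_sum]
      refine Finset.sum_congr rfl fun a _ => ?_
      rw [mul_ite, mul_zero, hmul]
    simp only [h1]
    rw [sum_snoc_aux (fun g => if gTail g = c' then ρ g else 0), sum_tail_aux]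
  constructor
  · intro h c
    rw [← key c, h c]
  · intro h c'
    rw [key c', h c']
end

section
/- The set F_n of n-gram distributions satisfying flow balance is a convex polytope: the s^{n−1} flow-balance equations L(c) = R(c) have exactly s^{n−1} − 1 independent members as affine constraints on the (s^n − 1)-dimensional simplex of n-gram distributions, and F_n has affine dimension s^{n−1}(s − 1). -/
/-!
`n`-gram distributions and flow balance on the de Bruijn graph.

We fix a finite alphabet `σ` with `s = |σ| ≥ 2` and an order `n = k + 1 ≥ 2`
(so contexts have length `k = n − 1 ≥ 1`).  An `n`-gram is a function
`Fin (k+1) → σ`; a context is a function `Fin k → σ`.  For an `n`-gram `g`,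
`gInit g` is its length-`k` prefix (the source vertex of the corresponding
de Bruijn edge) and `gTail g` its length-`k` suffix (the target vertex).
The `n`-gram `c·a` is `Fin.snoc c a` and `x·c` is `Fin.cons x c`; the shift
`σ(c,a)` is `gTail (Fin.snoc c a)`.
-/

open Finset

variable {σ : Type*}

attribute [local instance] Classical.propDecidable

/-- The flow-balance constraint vector attached to a context `c`: the linear functional
`ρ ↦ L(c) − R(c)` is the inner product of `ρ` with this vector. -/
noncomputable def constraintVec [Fintype σ] [DecidableEq σ] (k : ℕ)
    (c : Fin k → σ) : (Fin (k + 1) → σ) → ℝ :=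
  fun g => (if gInit g = c then (1 : ℝ) else 0) - (if gTail g = c then (1 : ℝ) else 0)


section NgramAux

variable [Fintype σ] [DecidableEq σ] {k : ℕ}

lemma sum_snoc_eq (F : (Fin (k+1) → σ) → ℝ) :
    ∑ g, F g = ∑ c : Fin k → σ, ∑ a : σ, F (Fin.snoc c a) := by
  rw [← Equiv.sum_comp (Fin.snocEquiv (fun _ => σ)) F, Fintype.sum_prod_type, Finset.sum_comm]
  rfl

lemma sum_cons_eq (F : (Fin (k+1) → σ) → ℝ) :
    ∑ g, F g = ∑ c : Fin k → σ, ∑ x : σ, F (Fin.cons x c) := by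
  rw [← Equiv.sum_comp (Fin.consEquiv (fun _ => σ)) F, Fintype.sum_prod_type, Finset.sum_comm]
  rfl

lemma dot_init (c : Fin k → σ) (x : (Fin (k+1) → σ) → ℝ) :
    ∑ g, (if gInit g = c then (1:ℝ) else 0) * x g = ∑ a, x (Fin.snoc c a) := by
  rw [sum_snoc_eq (fun g => (if gInit g = c then (1:ℝ) else 0) * x g), Finset.sum_comm]
  have : ∀ (c' : Fin k → σ) (a : σ), gInit (Fin.snoc c' a) = c' := by
    intro c' a; funext i; simp [gInit, Fin.snoc_castSucc]
  simp [this]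

lemma dot_tail (c : Fin k → σ) (x : (Fin (k+1) → σ) → ℝ) :
    ∑ g, (if gTail g = c then (1:ℝ) else 0) * x g = ∑ a, x (Fin.cons a c) := by
  rw [sum_cons_eq (fun g => (if gTail g = c then (1:ℝ) else 0) * x g), Finset.sum_comm]
  have : ∀ (c' : Fin k → σ) (a : σ), gTail (Fin.cons a c') = c' := by
    intro c' a; funext i; simp [gTail, Fin.cons_succ]
  simp [this]

lemma pairing (c : Fin k → σ) (x : (Fin (k+1) → σ) → ℝ) :
    ∑ g, constraintVec k c g * x g = Lmass x c - Rmass x c := by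
  have : ∀ g, constraintVec k c g * x g =
      (if gInit g = c then (1:ℝ) else 0) * x g - (if gTail g = c then (1:ℝ) else 0) * x g := by
    intro g; simp [constraintVec, sub_mul]
  simp only [this, Finset.sum_sub_distrib, dot_init, dot_tail, Lmass, Rmass]

lemma connect (hk : 1 ≤ k) (lam : (Fin k → σ) → ℝ)
    (h : ∀ g : Fin (k+1) → σ, lam (gInit g) = lam (gTail g)) (b c : Fin k → σ) :
    lam b = lam c := by
  have hk0 : 0 < k := hk
  set w : ℕ → σ := fun m => if h' : m < k then b ⟨m, h'⟩ else c ⟨m % k, Nat.mod_lt _ hk0⟩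
    with hw
  have key : ∀ t, t ≤ k → lam b = lam (fun i : Fin k => w (i.val + t)) := by
    intro t
    induction t with
    | zero =>
      intro _
      have : (fun i : Fin k => w (i.val + 0)) = b := by
        funext i; simp [hw, i.isLt]
      rw [this]
    | succ t ih =>
      intro ht
      rw [ih (by omega)]
      set g : Fin (k+1) → σ := fun j => w (j.val + t) with hg
      have e1 : gInit g = fun i : Fin k => w (i.val + t) := by
        funext i; simp [gInit, hg]
      have e2 : gTail g = fun i : Fin k => w (i.val + (t+1)) := by
        funext i
        simp only [gTail, hg, Fin.val_succ]
        congr 1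
        omega
      have := h g
      rw [e1, e2] at this
      exact this
  have hkk := key k le_rfl
  have : (fun i : Fin k => w (i.val + k)) = c := by
    funext i
    have : ¬ (i.val + k < k) := by omega
    simp [hw, this, Nat.add_mod_right, Nat.mod_eq_of_lt i.isLt]
  rw [this] at hkk
  exact hkk

lemma sum_range_constraint_zero : ∀ u ∈ Submodule.span ℝ
    (Set.range (constraintVec (σ := σ) k)), ∑ g, u g = 0 := by
  intro u hu
  induction hu using Submodule.span_induction with
  | mem u hu =>
    obtain ⟨c, rfl⟩ := hu
    have := pairing c (fun _ => (1:ℝ))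
    simp only [mul_one] at this
    rw [this]
    simp [Lmass, Rmass]
  | zero => simp
  | add u v _ _ hu hv => simp [Finset.sum_add_distrib, hu, hv]
  | smul a u _ hu => simp [← Finset.mul_sum, hu]

lemma one_not_mem_span (hs : 2 ≤ Fintype.card σ) :
    (fun _ => (1:ℝ)) ∉ Submodule.span ℝ (Set.range (constraintVec (σ := σ) k)) := by
  intro h
  have hσ : Nonempty σ := Fintype.card_pos_iff.mp (by omega)
  have h0 := sum_range_constraint_zero _ h
  have hcast : ((Fintype.card (Fin (k+1) → σ) : ℝ)) = 0 := by
    simpa [Finset.sum_const, Finset.card_univ] using h0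
  have hpos : 0 < Fintype.card (Fin (k+1) → σ) := Fintype.card_pos
  exact absurd hcast (by positivity)

lemma finrank_span_constraint (hk : 1 ≤ k) (hs : 2 ≤ Fintype.card σ) :
    Module.finrank ℝ (Submodule.span ℝ (Set.range (constraintVec (σ := σ) k))) =
      Fintype.card σ ^ k - 1 := by
  have hσ : Nonempty σ := Fintype.card_pos_iff.mp (by omega)
  set T := Fintype.linearCombination ℝ (constraintVec (σ := σ) k) with hT
  have hTapp : ∀ (lam : (Fin k → σ) → ℝ) (g : Fin (k+1) → σ),
      T lam g = lam (gInit g) - lam (gTail g) := by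
    intro lam g
    rw [hT, Fintype.linearCombination_apply]
    simp only [Finset.sum_apply, Pi.smul_apply, smul_eq_mul, constraintVec, mul_sub,
      Finset.sum_sub_distrib, mul_ite, mul_one, mul_zero]
    rw [Finset.sum_ite_eq, Finset.sum_ite_eq]
    simp
  have hrange : LinearMap.range T = Submodule.span ℝ (Set.range (constraintVec (σ := σ) k)) :=
    Fintype.range_linearCombination ℝ (constraintVec (σ := σ) k)
  have hker : LinearMap.ker T = Submodule.span ℝ {(fun _ => (1:ℝ) : (Fin k → σ) → ℝ)} := by
    apply le_antisymm
    · intro lam hlam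
      have h0 : ∀ g : Fin (k+1) → σ, lam (gInit g) = lam (gTail g) := by
        intro g
        have : T lam g = 0 := by rw [LinearMap.mem_ker.mp hlam]; rfl
        rw [hTapp] at this
        linarith
      have hc := connect hk lam h0
      set c0 : Fin k → σ := fun _ => Classical.arbitrary σ with hc0
      rw [Submodule.mem_span_singleton]
      exact ⟨lam c0, by funext c; simp [hc c c0]⟩
    · rw [Submodule.span_le]
      rintro x hx
      rw [Set.mem_singleton_iff] at hx
      subst hx
      rw [SetLike.mem_coe, LinearMap.mem_ker]
      funext g
      rw [hTapp]
      simp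
  have hrn := LinearMap.finrank_range_add_finrank_ker T
  rw [hrange, hker] at hrn
  have h1 : Module.finrank ℝ (Submodule.span ℝ {(fun _ => (1:ℝ) : (Fin k → σ) → ℝ)}) = 1 := by
    apply finrank_span_singleton
    intro h
    exact one_ne_zero (congrFun h (fun _ => Classical.arbitrary σ))
  have hdom : Module.finrank ℝ ((Fin k → σ) → ℝ) = Fintype.card σ ^ k := by
    rw [Module.finrank_pi]
    simp [Fintype.card_fun]
  rw [h1, hdom] at hrn
  have hp : 1 ≤ Fintype.card σ ^ k := Nat.one_le_pow _ _ (by omega)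
  omega

lemma finrank_span_insert_one (hk : 1 ≤ k) (hs : 2 ≤ Fintype.card σ) :
    Module.finrank ℝ (Submodule.span ℝ
      (insert (fun _ => (1:ℝ)) (Set.range (constraintVec (σ := σ) k)))) =
      Fintype.card σ ^ k := by
  rw [Submodule.span_insert]
  have hinf : (Submodule.span ℝ {(fun _ => (1:ℝ) : (Fin (k+1) → σ) → ℝ)}) ⊓
      Submodule.span ℝ (Set.range (constraintVec (σ := σ) k)) = ⊥ := by
    rw [Submodule.eq_bot_iff]
    rintro x ⟨hx1, hx0⟩
    obtain ⟨r, rfl⟩ := Submodule.mem_span_singleton.mp hx1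
    rcases eq_or_ne r 0 with h | h
    · simp [h]
    · exfalso
      apply one_not_mem_span (k := k) hs
      have := Submodule.smul_mem _ r⁻¹ hx0
      rwa [smul_smul, inv_mul_cancel₀ h, one_smul] at this
  have hsum := Submodule.finrank_sup_add_finrank_inf_eq
    (Submodule.span ℝ {(fun _ => (1:ℝ) : (Fin (k+1) → σ) → ℝ)})
    (Submodule.span ℝ (Set.range (constraintVec (σ := σ) k)))
  rw [hinf, finrank_span_constraint hk hs] at hsum
  have h1 : Module.finrank ℝ
      (Submodule.span ℝ {(fun _ => (1:ℝ) : (Fin (k+1) → σ) → ℝ)}) = 1 := by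
    apply finrank_span_singleton
    intro h
    have hσ : Nonempty σ := Fintype.card_pos_iff.mp (by omega)
    exact one_ne_zero (congrFun h (fun _ => Classical.arbitrary σ))
  rw [h1] at hsum
  have hp : 1 ≤ Fintype.card σ ^ k := Nat.one_le_pow _ _ (by omega)
  simp only [finrank_bot] at hsum
  omega

lemma mem_orthogonal_span_iff {E : Type*} [NormedAddCommGroup E] [InnerProductSpace ℝ E]
    (s : Set E) (x : E) :
    x ∈ (Submodule.span ℝ s)ᗮ ↔ ∀ u ∈ s, (inner ℝ u x : ℝ) = 0 := by
  constructor
  · intro h u hu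
    exact h u (Submodule.subset_span hu)
  · intro h u hu
    induction hu using Submodule.span_induction with
    | mem u hu => exact h u hu
    | zero => simp
    | add u v _ _ hu hv => rw [inner_add_left, hu, hv, add_zero]
    | smul a u _ hu => rw [real_inner_smul_left, hu, mul_zero]

end NgramAux

/-- `F_n` is a convex polytope: the `s^{n−1}` flow-balance equations
`L(c) = R(c)` have exactly `s^{n−1} − 1` independent members as affine constraints on
the `(s^n − 1)`-dimensional simplex of `n`-gram distributions (the span of the
constraint functionals has dimension `s^{n−1} − 1`), and `F_n` has affine dimension
`s^{n−1}(s − 1)`.  (Here `n = k + 1` and `s = |σ|`.) -/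
theorem flowPolytope_convex_and_dimension [Fintype σ] [DecidableEq σ]
    (k : ℕ) (hk : 1 ≤ k) (hs : 2 ≤ Fintype.card σ) :
    Convex ℝ (FlowPolytope σ k) ∧
    Module.finrank ℝ
        (Submodule.span ℝ (Set.range (constraintVec (σ := σ) k))) =
      Fintype.card σ ^ k - 1 ∧
    Module.finrank ℝ (affineSpan ℝ (FlowPolytope σ k)).direction =
      Fintype.card σ ^ k * (Fintype.card σ - 1) := by
  classical
  have hσ : Nonempty σ := Fintype.card_pos_iff.mp (by omega)
  have hconv : Convex ℝ (FlowPolytope σ k) := by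
    intro ρ₁ h₁ ρ₂ h₂ a b ha hb hab
    refine ⟨⟨fun g => ?_, ?_⟩, fun c => ?_⟩
    · have q1 := h₁.1.1 g; have q2 := h₂.1.1 g
      simp only [Pi.add_apply, Pi.smul_apply, smul_eq_mul]
      positivity
    · simp only [Pi.add_apply, Pi.smul_apply, smul_eq_mul, Finset.sum_add_distrib,
        ← Finset.mul_sum, h₁.1.2, h₂.1.2, mul_one]
      exact hab
    · have e1 := h₁.2 c; have e2 := h₂.2 c
      simp only [Lmass, Rmass] at e1 e2 ⊢
      simp only [Pi.add_apply, Pi.smul_apply, smul_eq_mul, Finset.sum_add_distrib,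
        ← Finset.mul_sum, e1, e2]
  refine ⟨hconv, finrank_span_constraint hk hs, ?_⟩
  set e := WithLp.linearEquiv 2 ℝ ((Fin (k+1) → σ) → ℝ) with he
  set U1 : Submodule ℝ (EuclideanSpace ℝ (Fin (k+1) → σ)) := Submodule.span ℝ
    (insert (e.symm (fun _ => (1:ℝ)))
      (Set.range (fun c => e.symm (constraintVec (σ := σ) k c)))) with hU1
  have hmap : U1.map (e : EuclideanSpace ℝ (Fin (k+1) → σ) →ₗ[ℝ] ((Fin (k+1) → σ) → ℝ)) =
      Submodule.span ℝ (insert (fun _ => (1:ℝ)) (Set.range (constraintVec (σ := σ) k))) := by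
    rw [hU1, Submodule.map_span]
    congr 1
    rw [Set.image_insert_eq, ← Set.range_comp]
    simp [Function.comp_def]
  have hU1rank : Module.finrank ℝ U1 = Fintype.card σ ^ k := by
    rw [← LinearEquiv.finrank_map_eq e U1, hmap, finrank_span_insert_one hk hs]
  have hinner : ∀ u x : ((Fin (k+1) → σ) → ℝ),
      (inner ℝ (e.symm u) (e.symm x) : ℝ) = ∑ g, u g * x g := by
    intro u x
    rw [PiLp.inner_apply]
    simp only [Real.inner_apply]
    rfl
  have hmemW : ∀ x : ((Fin (k+1) → σ) → ℝ), e.symm x ∈ U1ᗮ ↔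
      ((∑ g, x g = 0) ∧ ∀ c, Lmass x c = Rmass x c) := by
    intro x
    rw [hU1, mem_orthogonal_span_iff]
    constructor
    · intro h
      constructor
      · have h1 := h _ (Set.mem_insert _ _)
        rw [hinner] at h1
        simpa using h1
      · intro c
        have h1 := h _ (Set.mem_insert_of_mem _ (Set.mem_range_self c))
        rw [hinner, pairing] at h1
        linarith
    · rintro ⟨hsum, hbal⟩ u hu
      rcases Set.mem_insert_iff.mp hu with h | h
      · subst h
        rw [hinner]
        simpa using hsum
      · obtain ⟨c, rfl⟩ := h
        rw [hinner, pairing, hbal c, sub_self]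
  set Nn := Fintype.card (Fin (k+1) → σ) with hNn
  have hNcard : Nn = Fintype.card σ ^ (k+1) := by
    simp [hNn, Fintype.card_fun]
  have hNpos : 0 < Nn := Fintype.card_pos
  set ρu : (Fin (k+1) → σ) → ℝ := fun _ => (Nn : ℝ)⁻¹ with hρu
  have hρuP : ρu ∈ FlowPolytope σ k := by
    refine ⟨⟨fun g => by simp only [hρu]; positivity, ?_⟩, fun c => ?_⟩
    · simp only [hρu, Finset.sum_const, Finset.card_univ, ← hNn, nsmul_eq_mul]
      rw [mul_inv_cancel₀ (by exact_mod_cast hNpos.ne')]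
    · simp [Lmass, Rmass, hρu]
  have hdir : (affineSpan ℝ (FlowPolytope σ k)).direction =
      U1ᗮ.map (e : EuclideanSpace ℝ (Fin (k+1) → σ) →ₗ[ℝ] ((Fin (k+1) → σ) → ℝ)) := by
    rw [direction_affineSpan]
    apply le_antisymm
    · rw [vectorSpan_def, Submodule.span_le]
      rintro x ⟨ρ₁, h₁, ρ₂, h₂, rfl⟩
      refine Submodule.mem_map.mpr ⟨e.symm (ρ₁ -ᵥ ρ₂), ?_, by simp⟩
      rw [hmemW]
      constructor
      · simp [vsub_eq_sub, Finset.sum_sub_distrib, h₁.1.2, h₂.1.2]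
      · intro c
        have e1 := h₁.2 c; have e2 := h₂.2 c
        simp only [Lmass, Rmass] at e1 e2 ⊢
        simp [vsub_eq_sub, Finset.sum_sub_distrib, e1, e2]
    · rintro x ⟨y, hy, rfl⟩
      set xf := e y with hxf
      have hy' : e.symm xf ∈ U1ᗮ := by rw [hxf, LinearEquiv.symm_apply_apply]; exact hy
      obtain ⟨hsum, hbal⟩ := (hmemW xf).mp hy'
      set S := ∑ g, |xf g| with hS
      have hS0 : 0 ≤ S := Finset.sum_nonneg fun g _ => abs_nonneg _
      set ε := (Nn:ℝ)⁻¹ / (1 + S) with hε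
      have hNR : (0:ℝ) < (Nn:ℝ) := by exact_mod_cast hNpos
      have hεpos : 0 < ε := by positivity
      have h1S : (0:ℝ) < 1 + S := by linarith
      have hεS : ε * S ≤ (Nn:ℝ)⁻¹ := by
        have h1 : ε * (1 + S) = (Nn:ℝ)⁻¹ := by
          rw [hε, div_mul_cancel₀ _ h1S.ne']
        nlinarith
      set ρ := ρu + ε • xf with hρ
      have hρP : ρ ∈ FlowPolytope σ k := by
        refine ⟨⟨fun g => ?_, ?_⟩, fun c => ?_⟩
        · have habs : |xf g| ≤ S :=
            Finset.single_le_sum (f := fun g => |xf g|) (fun _ _ => abs_nonneg _)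
              (Finset.mem_univ g)
          have h2 : ε * |xf g| ≤ (Nn:ℝ)⁻¹ := le_trans (by nlinarith) hεS
          have h3 := neg_abs_le (xf g)
          simp only [hρ, Pi.add_apply, Pi.smul_apply, smul_eq_mul, hρu]
          nlinarith
        · simp only [hρ, Pi.add_apply, Pi.smul_apply, smul_eq_mul, Finset.sum_add_distrib,
            ← Finset.mul_sum, hsum, mul_zero, add_zero]
          exact hρuP.1.2
        · have hLu := hρuP.2 c
          have hb := hbal c
          simp only [Lmass, Rmass] at hLu hb ⊢
          simp only [hρ, Pi.add_apply, Pi.smul_apply, smul_eq_mul, Finset.sum_add_distrib,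
            ← Finset.mul_sum, hLu, hb]
      have hvs : ρ -ᵥ ρu ∈ vectorSpan ℝ (FlowPolytope σ k) :=
        vsub_mem_vectorSpan ℝ hρP hρuP
      have heq : ρ -ᵥ ρu = ε • xf := by
        simp [hρ, vsub_eq_sub]
      rw [heq] at hvs
      have hsm := Submodule.smul_mem (vectorSpan ℝ (FlowPolytope σ k)) ε⁻¹ hvs
      rwa [smul_smul, inv_mul_cancel₀ hεpos.ne', one_smul] at hsm
  rw [hdir, LinearEquiv.finrank_map_eq]
  have horth := U1.finrank_add_finrank_orthogonal
  have hE : Module.finrank ℝ (EuclideanSpace ℝ (Fin (k+1) → σ)) = Fintype.card σ ^ (k+1) := by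
    rw [finrank_euclideanSpace]
    simp [Fintype.card_fun]
  rw [hU1rank, hE] at horth
  have hsub : Module.finrank ℝ U1ᗮ = Fintype.card σ ^ (k+1) - Fintype.card σ ^ k :=
    Nat.eq_sub_of_add_eq' horth
  rw [hsub, pow_succ, Nat.mul_sub, mul_one]
end

section
/- For every simple directed cycle γ in the de Bruijn graph B(n−1,s), the cycle flow f_γ is an extreme point of the polytope F_n: if f_γ = λ f₁ + (1−λ) f₂ with f₁, f₂ ∈ F_n and 0 < λ < 1, then f₁ = f₂ = f_γ. Moreover, distinct simple directed cycles (distinct edge sets, identifying rotations) yield distinct cycle flows. -/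
/-!
`n`-gram distributions and flow balance on the de Bruijn graph.

We fix a finite alphabet `σ` with `s = |σ| ≥ 2` and an order `n = k + 1 ≥ 2`
(so contexts have length `k = n − 1 ≥ 1`).  An `n`-gram is a function
`Fin (k+1) → σ`; a context is a function `Fin k → σ`.  For an `n`-gram `g`,
`gInit g` is its length-`k` prefix (the source vertex of the corresponding
de Bruijn edge) and `gTail g` its length-`k` suffix (the target vertex).
The `n`-gram `c·a` is `Fin.snoc c a` and `x·c` is `Fin.cons x c`; the shift
`σ(c,a)` is `gTail (Fin.snoc c a)`.
-/

open Finset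

variable {σ : Type*}

attribute [local instance] Classical.propDecidable

section Aux

lemma gInit_snoc {k : ℕ} (c : Fin k → σ) (a : σ) : gInit (Fin.snoc c a) = c := by
  funext i; simp [gInit]

lemma gTail_cons {k : ℕ} (x : σ) (c : Fin k → σ) : gTail (Fin.cons x c) = c := by
  funext i; simp [gTail]

lemma snoc_gInit {k : ℕ} (g : Fin (k + 1) → σ) :
    Fin.snoc (gInit g) (g (Fin.last k)) = g := by
  funext i
  refine Fin.lastCases ?_ ?_ i
  · simp
  · intro j; simp [gInit]

lemma cons_gTail {k : ℕ} (g : Fin (k + 1) → σ) :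
    Fin.cons (g 0) (gTail g) = g := by
  funext i
  refine Fin.cases ?_ ?_ i
  · simp
  · intro j; simp [gTail]

/-- Successor map in a cycle of length `p`. -/
def nxt {p : ℕ} (i : Fin p) : Fin p := ⟨(i.val + 1) % p, Nat.mod_lt _ i.pos⟩

lemma nxt_inj {p : ℕ} : Function.Injective (nxt (p := p)) := by
  intro a b h
  have ha := a.2; have hb := b.2
  have key : ∀ m : ℕ, m < p → (m + 1) % p = if m + 1 = p then 0 else m + 1 := by
    intro m hm
    split
    · next h => rw [h, Nat.mod_self]
    · next h => exact Nat.mod_eq_of_lt (by omega)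
  have hv : (a.1 + 1) % p = (b.1 + 1) % p := congrArg Fin.val h
  rw [key a.1 ha, key b.1 hb] at hv
  apply Fin.ext
  split_ifs at hv <;> omega

lemma nxt_surj {p : ℕ} : Function.Surjective (nxt (p := p)) :=
  Finite.injective_iff_surjective.mp nxt_inj

namespace SimpleCycle

variable {k : ℕ} (γ : SimpleCycle σ k)

lemma edge_inj : Function.Injective γ.edge :=
  fun i j h => γ.simple (show gInit (γ.edge i) = gInit (γ.edge j) by rw [h])

lemma cyc' (i : Fin γ.p) : gTail (γ.edge i) = gInit (γ.edge (nxt i)) := γ.cyc i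

lemma tail_inj : Function.Injective fun i => gTail (γ.edge i) := by
  intro a b h
  simp only [cyc'] at h
  exact nxt_inj (γ.simple h)

variable [Fintype σ] [DecidableEq σ]

lemma Lmass_eq (f : (Fin (k + 1) → σ) → ℝ)
    (hsupp : ∀ g ∉ Set.range γ.edge, f g = 0) (i : Fin γ.p) :
    Lmass f (gInit (γ.edge i)) = f (γ.edge i) := by
  unfold Lmass
  rw [Finset.sum_eq_single (γ.edge i (Fin.last k))]
  · rw [snoc_gInit]
  · intro b _ hb
    apply hsupp
    rintro ⟨j, hj⟩
    have hji : j = i := γ.simple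
      (show gInit (γ.edge j) = gInit (γ.edge i) by rw [hj, gInit_snoc])
    apply hb
    have hlast : γ.edge j (Fin.last k) = b := by rw [hj, Fin.snoc_last]
    rw [← hlast, hji]
  · intro h; exact absurd (Finset.mem_univ _) h

lemma Rmass_eq (f : (Fin (k + 1) → σ) → ℝ)
    (hsupp : ∀ g ∉ Set.range γ.edge, f g = 0) (i : Fin γ.p) :
    Rmass f (gTail (γ.edge i)) = f (γ.edge i) := by
  unfold Rmass
  rw [Finset.sum_eq_single (γ.edge i 0)]
  · rw [cons_gTail]
  · intro x _ hx
    apply hsupp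
    rintro ⟨j, hj⟩
    have hji : j = i := γ.tail_inj
      (show gTail (γ.edge j) = gTail (γ.edge i) by rw [hj, gTail_cons])
    apply hx
    have h0 : γ.edge j 0 = x := by rw [hj, Fin.cons_zero]
    rw [← h0, hji]
  · intro h; exact absurd (Finset.mem_univ _) h

lemma Lmass_zero (f : (Fin (k + 1) → σ) → ℝ)
    (hsupp : ∀ g ∉ Set.range γ.edge, f g = 0) (c : Fin k → σ)
    (hc : ∀ i, gInit (γ.edge i) ≠ c) : Lmass f c = 0 := by
  unfold Lmass
  apply Finset.sum_eq_zero
  intro a _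
  apply hsupp
  rintro ⟨j, hj⟩
  exact hc j (by rw [hj, gInit_snoc])

lemma Rmass_zero (f : (Fin (k + 1) → σ) → ℝ)
    (hsupp : ∀ g ∉ Set.range γ.edge, f g = 0) (c : Fin k → σ)
    (hc : ∀ i, gInit (γ.edge i) ≠ c) : Rmass f c = 0 := by
  unfold Rmass
  apply Finset.sum_eq_zero
  intro x _
  apply hsupp
  rintro ⟨j, hj⟩
  refine hc (nxt j) ?_
  rw [← γ.cyc' j, hj, gTail_cons]

lemma sum_range (f : (Fin (k + 1) → σ) → ℝ)
    (hsupp : ∀ g ∉ Set.range γ.edge, f g = 0) :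
    ∑ g, f g = ∑ i, f (γ.edge i) := by
  calc ∑ g, f g = ∑ g ∈ Finset.univ.image γ.edge, f g := by
        refine (Finset.sum_subset (Finset.subset_univ _) ?_).symm
        intro g _ hg
        apply hsupp
        rintro ⟨j, rfl⟩
        exact hg (Finset.mem_image.mpr ⟨j, Finset.mem_univ _, rfl⟩)
    _ = ∑ i, f (γ.edge i) :=
        Finset.sum_image (fun x _ y _ h => γ.edge_inj h)

lemma cycleFlow_supp : ∀ g ∉ Set.range γ.edge, cycleFlow γ g = 0 := by
  intro g hg; rw [cycleFlow, if_neg hg]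

lemma cycleFlow_edge (i : Fin γ.p) : cycleFlow γ (γ.edge i) = 1 / (γ.p : ℝ) := by
  rw [cycleFlow, if_pos ⟨i, rfl⟩]

lemma cycleFlow_mem : cycleFlow γ ∈ FlowPolytope σ k := by
  have hp0 : (γ.p : ℝ) ≠ 0 := Nat.cast_ne_zero.mpr γ.ppos.ne'
  refine ⟨⟨?_, ?_⟩, ?_⟩
  · intro g
    rw [cycleFlow]
    split
    · positivity
    · exact le_refl 0
  · rw [γ.sum_range _ γ.cycleFlow_supp]
    have : ∀ i ∈ Finset.univ, cycleFlow γ (γ.edge i) = 1 / (γ.p : ℝ) :=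
      fun i _ => γ.cycleFlow_edge i
    rw [Finset.sum_congr rfl this, Finset.sum_const, Finset.card_univ, Fintype.card_fin,
      nsmul_eq_mul]
    field_simp
  · intro c
    by_cases hvis : ∃ i, gInit (γ.edge i) = c
    · obtain ⟨i, rfl⟩ := hvis
      obtain ⟨j, hj⟩ := nxt_surj (p := γ.p) i
      have htail : gTail (γ.edge j) = gInit (γ.edge i) := by rw [γ.cyc' j, hj]
      rw [γ.Lmass_eq _ γ.cycleFlow_supp i, ← htail, γ.Rmass_eq _ γ.cycleFlow_supp j,
        γ.cycleFlow_edge, γ.cycleFlow_edge]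
    · push_neg at hvis
      rw [γ.Lmass_zero _ γ.cycleFlow_supp c hvis, γ.Rmass_zero _ γ.cycleFlow_supp c hvis]

/-- Any member of the flow polytope supported on the edges of a simple cycle
equals the cycle flow. -/
lemma eq_cycleFlow (f : (Fin (k + 1) → σ) → ℝ) (hf : f ∈ FlowPolytope σ k)
    (hsupp : ∀ g ∉ Set.range γ.edge, f g = 0) : f = cycleFlow γ := by
  obtain ⟨⟨hpos, hsum⟩, hbal⟩ := hf
  have hp0 : (γ.p : ℝ) ≠ 0 := Nat.cast_ne_zero.mpr γ.ppos.ne'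
  have step : ∀ i, f (γ.edge (nxt i)) = f (γ.edge i) := by
    intro i
    calc f (γ.edge (nxt i)) = Lmass f (gInit (γ.edge (nxt i))) :=
          (γ.Lmass_eq f hsupp _).symm
      _ = Rmass f (gInit (γ.edge (nxt i))) := hbal _
      _ = Rmass f (gTail (γ.edge i)) := by rw [γ.cyc' i]
      _ = f (γ.edge i) := γ.Rmass_eq f hsupp i
  have key : ∀ m : ℕ, f (γ.edge ⟨m % γ.p, Nat.mod_lt _ γ.ppos⟩) =
      f (γ.edge ⟨0, γ.ppos⟩) := by
    intro m
    induction m with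
    | zero =>
      exact congrArg (fun j => f (γ.edge j)) (Fin.ext (Nat.zero_mod _))
    | succ m ih =>
      have hfin : (⟨(m + 1) % γ.p, Nat.mod_lt _ γ.ppos⟩ : Fin γ.p) =
          nxt ⟨m % γ.p, Nat.mod_lt _ γ.ppos⟩ := by
        apply Fin.ext
        show (m + 1) % γ.p = (m % γ.p + 1) % γ.p
        conv_rhs => rw [Nat.add_mod, Nat.mod_mod_of_dvd _ dvd_rfl, ← Nat.add_mod]
      rw [hfin, step, ih]
  have const : ∀ i : Fin γ.p, f (γ.edge i) = f (γ.edge ⟨0, γ.ppos⟩) := by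
    intro i
    have h := key i.1
    have hi : (⟨i.1 % γ.p, Nat.mod_lt _ γ.ppos⟩ : Fin γ.p) = i :=
      Fin.ext (Nat.mod_eq_of_lt i.2)
    rwa [hi] at h
  have hsum' : (γ.p : ℝ) * f (γ.edge ⟨0, γ.ppos⟩) = 1 := by
    rw [← hsum, γ.sum_range f hsupp,
      Finset.sum_congr rfl (fun i _ => const i), Finset.sum_const, Finset.card_univ,
      Fintype.card_fin, nsmul_eq_mul]
  have hc0 : f (γ.edge ⟨0, γ.ppos⟩) = 1 / (γ.p : ℝ) :=
    eq_one_div_of_mul_eq_one_left (by rw [mul_comm] at hsum'; exact hsum')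
  funext g
  by_cases hg : g ∈ Set.range γ.edge
  · obtain ⟨i, rfl⟩ := hg
    rw [γ.cycleFlow_edge i, const i, hc0]
  · rw [hsupp g hg, γ.cycleFlow_supp g hg]

end SimpleCycle

end Aux

/-- For every simple directed cycle `γ` in the de Bruijn graph
`B(n−1,s)`, the cycle flow `f_γ` is a member and an extreme point of the polytope
`F_n`: if `f_γ = λ·f₁ + (1−λ)·f₂` with `f₁, f₂ ∈ F_n` and `0 < λ < 1`, then
`f₁ = f₂ = f_γ`.  Moreover, distinct simple directed cycles (distinct traversed edge
sets, which identifies rotations) yield distinct cycle flows. -/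
theorem cycleFlow_extremePoint [Fintype σ] [DecidableEq σ]
    (k : ℕ) (hk : 1 ≤ k) (hs : 2 ≤ Fintype.card σ)
    (γ : SimpleCycle σ k) :
    cycleFlow γ ∈ FlowPolytope σ k ∧
    (∀ f₁ ∈ FlowPolytope σ k, ∀ f₂ ∈ FlowPolytope σ k, ∀ l : ℝ, 0 < l → l < 1 →
      cycleFlow γ = l • f₁ + (1 - l) • f₂ → f₁ = cycleFlow γ ∧ f₂ = cycleFlow γ) ∧
    cycleFlow γ ∈ Set.extremePoints ℝ (FlowPolytope σ k) ∧
    (∀ γ' : SimpleCycle σ k, Set.range γ.edge ≠ Set.range γ'.edge →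
      cycleFlow γ ≠ cycleFlow γ') := by
  have hmem := γ.cycleFlow_mem
  have hext : ∀ f₁ ∈ FlowPolytope σ k, ∀ f₂ ∈ FlowPolytope σ k, ∀ l : ℝ,
      0 < l → l < 1 → cycleFlow γ = l • f₁ + (1 - l) • f₂ →
      f₁ = cycleFlow γ ∧ f₂ = cycleFlow γ := by
    intro f₁ hf₁ f₂ hf₂ l hl hl1 heq
    have hl' : (0 : ℝ) < 1 - l := by linarith
    have hpos₁ := hf₁.1.1
    have hpos₂ := hf₂.1.1
    have hsupp : ∀ g ∉ Set.range γ.edge, f₁ g = 0 ∧ f₂ g = 0 := by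
      intro g hg
      have h0 : l * f₁ g + (1 - l) * f₂ g = 0 := by
        have := congrFun heq g
        simp only [Pi.add_apply, Pi.smul_apply, smul_eq_mul] at this
        rw [← this, γ.cycleFlow_supp g hg]
      have h1 : 0 ≤ l * f₁ g := mul_nonneg hl.le (hpos₁ g)
      have h2 : 0 ≤ (1 - l) * f₂ g := mul_nonneg hl'.le (hpos₂ g)
      constructor
      · have : l * f₁ g = 0 := by linarith
        rcases mul_eq_zero.mp this with h | h
        · exact absurd h hl.ne'
        · exact h
      · have : (1 - l) * f₂ g = 0 := by linarith
        rcases mul_eq_zero.mp this with h | h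
        · exact absurd h hl'.ne'
        · exact h
    exact ⟨γ.eq_cycleFlow f₁ hf₁ (fun g hg => (hsupp g hg).1),
      γ.eq_cycleFlow f₂ hf₂ (fun g hg => (hsupp g hg).2)⟩
  refine ⟨hmem, hext, ⟨hmem, ?_⟩, ?_⟩
  · intro x₁ hx₁ x₂ hx₂ hseg
    obtain ⟨a, b, ha, hb, hab, hsum⟩ := hseg
    exact (hext x₁ hx₁ x₂ hx₂ a ha (by linarith)
      (by rw [← hsum, show (1 : ℝ) - a = b by linarith])).1
  · intro γ' hne heq
    apply hne
    have hrange : ∀ δ : SimpleCycle σ k,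
        Set.range δ.edge = {g | cycleFlow δ g ≠ 0} := by
      intro δ
      ext g
      simp only [Set.mem_setOf_eq, cycleFlow]
      constructor
      · intro hg
        rw [if_pos hg]
        exact one_div_ne_zero (Nat.cast_ne_zero.mpr δ.ppos.ne')
      · intro h
        by_contra hg
        rw [if_neg hg] at h
        exact h rfl
    rw [hrange γ, hrange γ', heq]
end

section
/- For the binary alphabet Σ = {0,1} and order n = 3, the polytope of trigram distributions satisfying flow balance is a 4-dimensional convex polytope with exactly six extreme points. Writing trigram distributions as vectors on (000,001,010,011,100,101,110,111), the six extreme points are: (1,0,0,0,0,0,0,0); (0,0,0,0,0,0,0,1); (0,0,1/2,0,0,1/2,0,0); (0,1/3,1/3,0,1/3,0,0,0); (0,0,0,1/3,0,1/3,1/3,0); and (0,1/4,0,1/4,1/4,0,1/4,0). Each extreme point is the trigram distribution of a periodic binary sequence in which each visited length-2 context has a unique next token. -/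
/-!
`n`-gram distributions and flow balance on the de Bruijn graph.

We fix a finite alphabet `σ` with `s = |σ| ≥ 2` and an order `n = k + 1 ≥ 2`
(so contexts have length `k = n − 1 ≥ 1`).  An `n`-gram is a function
`Fin (k+1) → σ`; a context is a function `Fin k → σ`.  For an `n`-gram `g`,
`gInit g` is its length-`k` prefix (the source vertex of the corresponding
de Bruijn edge) and `gTail g` its length-`k` suffix (the target vertex).
The `n`-gram `c·a` is `Fin.snoc c a` and `x·c` is `Fin.cons x c`; the shift
`σ(c,a)` is `gTail (Fin.snoc c a)`.
-/

open Finset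

variable {σ : Type*}

attribute [local instance] Classical.propDecidable

/-- Vertex `(1,0,0,0,0,0,0,0)`: the constant sequence `…000…`. -/
noncomputable def V1 : (Fin 3 → Fin 2) → ℝ := fun g => if g = ![0, 0, 0] then 1 else 0

/-- Vertex `(0,0,0,0,0,0,0,1)`: the constant sequence `…111…`. -/
noncomputable def V2 : (Fin 3 → Fin 2) → ℝ := fun g => if g = ![1, 1, 1] then 1 else 0

/-- Vertex `(0,0,1/2,0,0,1/2,0,0)`: the alternating sequence `…0101…`. -/
noncomputable def V3 : (Fin 3 → Fin 2) → ℝ :=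
  fun g => if g = ![0, 1, 0] ∨ g = ![1, 0, 1] then 1 / 2 else 0

/-- Vertex `(0,1/3,1/3,0,1/3,0,0,0)`: the period-3 sequence `…001001…`. -/
noncomputable def V4 : (Fin 3 → Fin 2) → ℝ :=
  fun g => if g = ![0, 0, 1] ∨ g = ![0, 1, 0] ∨ g = ![1, 0, 0] then 1 / 3 else 0

/-- Vertex `(0,0,0,1/3,0,1/3,1/3,0)`: the period-3 sequence `…011011…`. -/
noncomputable def V5 : (Fin 3 → Fin 2) → ℝ :=
  fun g => if g = ![0, 1, 1] ∨ g = ![1, 0, 1] ∨ g = ![1, 1, 0] then 1 / 3 else 0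

/-- Vertex `(0,1/4,0,1/4,1/4,0,1/4,0)`: the period-4 sequence `…00110011…`. -/
noncomputable def V6 : (Fin 3 → Fin 2) → ℝ :=
  fun g => if g = ![0, 0, 1] ∨ g = ![0, 1, 1] ∨ g = ![1, 0, 0] ∨ g = ![1, 1, 0]
    then 1 / 4 else 0

namespace BTP
lemma gram_cases (g : Fin 3 → Fin 2) : g = ![0,0,0] ∨ g = ![0,0,1] ∨ g = ![0,1,0] ∨ g = ![0,1,1] ∨ g = ![1,0,0] ∨ g = ![1,0,1] ∨ g = ![1,1,0] ∨ g = ![1,1,1] := by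
  revert g; decide

lemma ctx_cases (c : Fin 2 → Fin 2) : c = ![0,0] ∨ c = ![0,1] ∨ c = ![1,0] ∨ c = ![1,1] := by
  revert c; decide

lemma sum_pi3 (f : (Fin 3 → Fin 2) → ℝ) :
    ∑ g, f g = f ![0,0,0] + f ![0,0,1] + f ![0,1,0] + f ![0,1,1] + f ![1,0,0] + f ![1,0,1] + f ![1,1,0] + f ![1,1,1] := by
  rw [show (Finset.univ : Finset (Fin 3 → Fin 2)) =
    {![0,0,0],![0,0,1],![0,1,0],![0,1,1],![1,0,0],![1,0,1],![1,1,0],![1,1,1]} from by decide]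
  rw [show ({![0,0,0],![0,0,1],![0,1,0],![0,1,1],![1,0,0],![1,0,1],![1,1,0],![1,1,1]} : Finset (Fin 3 → Fin 2)) =
    insert ![0,0,0] (insert ![0,0,1] (insert ![0,1,0] (insert ![0,1,1] (insert ![1,0,0] (insert ![1,0,1] (insert ![1,1,0] {![1,1,1]})))))) from rfl]
  rw [Finset.sum_insert (by decide), Finset.sum_insert (by decide), Finset.sum_insert (by decide),
    Finset.sum_insert (by decide), Finset.sum_insert (by decide), Finset.sum_insert (by decide),
    Finset.sum_insert (by decide), Finset.sum_singleton]
  ring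

lemma Lmass_eq (ρ : (Fin 3 → Fin 2) → ℝ) (c : Fin 2 → Fin 2) :
    Lmass ρ c = ρ ![c 0, c 1, 0] + ρ ![c 0, c 1, 1] := by
  rw [Lmass, Fin.sum_univ_two]
  congr 1 <;> congr 1 <;> funext i <;> fin_cases i <;>
    rfl

lemma Rmass_eq (ρ : (Fin 3 → Fin 2) → ℝ) (c : Fin 2 → Fin 2) :
    Rmass ρ c = ρ ![0, c 0, c 1] + ρ ![1, c 0, c 1] := by
  rw [Rmass, Fin.sum_univ_two]
  congr 1 <;> congr 1 <;> funext i <;> fin_cases i <;> rfl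

lemma mem_iff (ρ : (Fin 3 → Fin 2) → ℝ) :
    ρ ∈ FlowPolytope (Fin 2) 2 ↔
      (∀ g, 0 ≤ ρ g) ∧
      ρ ![0,0,0] + ρ ![0,0,1] + ρ ![0,1,0] + ρ ![0,1,1] + ρ ![1,0,0] + ρ ![1,0,1] + ρ ![1,1,0] + ρ ![1,1,1] = 1 ∧
      ρ ![0,0,1] = ρ ![1,0,0] ∧
      ρ ![0,1,1] = ρ ![1,1,0] ∧
      ρ ![0,1,0] + ρ ![0,1,1] = ρ ![0,0,1] + ρ ![1,0,1] := by
  constructor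
  · rintro ⟨⟨hn, hs⟩, hb⟩
    have h00 := hb ![0,0]; have h01 := hb ![0,1]; have h11 := hb ![1,1]
    rw [Lmass_eq, Rmass_eq] at h00 h01 h11
    simp only [Matrix.cons_val_zero, Matrix.cons_val_one, Matrix.head_cons] at h00 h01 h11
    rw [sum_pi3] at hs
    exact ⟨hn, hs, by linarith, by linarith, by linarith⟩
  · rintro ⟨hn, hs, h1, h2, h3⟩
    refine ⟨⟨hn, by rw [sum_pi3]; linarith⟩, fun c => ?_⟩
    rw [Lmass_eq, Rmass_eq]
    rcases ctx_cases c with rfl | rfl | rfl | rfl <;>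
      simp only [Matrix.cons_val_zero, Matrix.cons_val_one, Matrix.head_cons] <;> linarith


lemma memV1 : V1 ∈ FlowPolytope (Fin 2) 2 := by
  rw [mem_iff]
  refine ⟨fun g => by unfold V1; split <;> norm_num, ?_, ?_, ?_, ?_⟩ <;>
    simp (config := { decide := true }) [V1]
lemma memV2 : V2 ∈ FlowPolytope (Fin 2) 2 := by
  rw [mem_iff]
  refine ⟨fun g => by unfold V2; split <;> norm_num, ?_, ?_, ?_, ?_⟩ <;>
    simp (config := { decide := true }) [V2]
lemma memV3 : V3 ∈ FlowPolytope (Fin 2) 2 := by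
  rw [mem_iff]
  refine ⟨fun g => by unfold V3; split <;> norm_num, ?_, ?_, ?_, ?_⟩ <;>
    simp (config := { decide := true }) [V3] <;> norm_num
lemma memV4 : V4 ∈ FlowPolytope (Fin 2) 2 := by
  rw [mem_iff]
  refine ⟨fun g => by unfold V4; split <;> norm_num, ?_, ?_, ?_, ?_⟩ <;>
    simp (config := { decide := true }) [V4] <;> norm_num
lemma memV5 : V5 ∈ FlowPolytope (Fin 2) 2 := by
  rw [mem_iff]
  refine ⟨fun g => by unfold V5; split <;> norm_num, ?_, ?_, ?_, ?_⟩ <;>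
    simp (config := { decide := true }) [V5] <;> norm_num
lemma memV6 : V6 ∈ FlowPolytope (Fin 2) 2 := by
  rw [mem_iff]
  refine ⟨fun g => by unfold V6; split <;> norm_num, ?_, ?_, ?_, ?_⟩ <;>
    simp (config := { decide := true }) [V6] <;> norm_num

lemma pin1 (x : (Fin 3 → Fin 2) → ℝ) (hx : x ∈ FlowPolytope (Fin 2) 2)
    (h1 : x ![0,0,1] = 0) (h2 : x ![0,1,0] = 0) (h3 : x ![0,1,1] = 0)
    (h4 : x ![1,0,0] = 0) (h5 : x ![1,0,1] = 0) (h6 : x ![1,1,0] = 0)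
    (h7 : x ![1,1,1] = 0) : x = V1 := by
  obtain ⟨-, hs, e1, e2, e3⟩ := (mem_iff x).1 hx
  funext g
  rcases gram_cases g with rfl|rfl|rfl|rfl|rfl|rfl|rfl|rfl <;>
    simp (config := { decide := true }) [V1] <;> linarith

lemma pin2 (x : (Fin 3 → Fin 2) → ℝ) (hx : x ∈ FlowPolytope (Fin 2) 2)
    (h1 : x ![0,0,0] = 0) (h2 : x ![0,0,1] = 0) (h3 : x ![0,1,0] = 0)
    (h4 : x ![0,1,1] = 0) (h5 : x ![1,0,0] = 0) (h6 : x ![1,0,1] = 0)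
    (h7 : x ![1,1,0] = 0) : x = V2 := by
  obtain ⟨-, hs, e1, e2, e3⟩ := (mem_iff x).1 hx
  funext g
  rcases gram_cases g with rfl|rfl|rfl|rfl|rfl|rfl|rfl|rfl <;>
    simp (config := { decide := true }) [V2] <;> linarith

lemma pin3 (x : (Fin 3 → Fin 2) → ℝ) (hx : x ∈ FlowPolytope (Fin 2) 2)
    (h1 : x ![0,0,0] = 0) (h2 : x ![0,0,1] = 0) (h3 : x ![0,1,1] = 0)
    (h4 : x ![1,0,0] = 0) (h5 : x ![1,1,0] = 0) (h6 : x ![1,1,1] = 0) : x = V3 := by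
  obtain ⟨-, hs, e1, e2, e3⟩ := (mem_iff x).1 hx
  funext g
  rcases gram_cases g with rfl|rfl|rfl|rfl|rfl|rfl|rfl|rfl <;>
    simp (config := { decide := true }) [V3] <;> linarith

lemma pin4 (x : (Fin 3 → Fin 2) → ℝ) (hx : x ∈ FlowPolytope (Fin 2) 2)
    (h1 : x ![0,0,0] = 0) (h2 : x ![0,1,1] = 0) (h3 : x ![1,0,1] = 0)
    (h4 : x ![1,1,0] = 0) (h5 : x ![1,1,1] = 0) : x = V4 := by
  obtain ⟨-, hs, e1, e2, e3⟩ := (mem_iff x).1 hx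
  funext g
  rcases gram_cases g with rfl|rfl|rfl|rfl|rfl|rfl|rfl|rfl <;>
    simp (config := { decide := true }) [V4] <;> linarith

lemma pin5 (x : (Fin 3 → Fin 2) → ℝ) (hx : x ∈ FlowPolytope (Fin 2) 2)
    (h1 : x ![0,0,0] = 0) (h2 : x ![0,0,1] = 0) (h3 : x ![0,1,0] = 0)
    (h4 : x ![1,0,0] = 0) (h5 : x ![1,1,1] = 0) : x = V5 := by
  obtain ⟨-, hs, e1, e2, e3⟩ := (mem_iff x).1 hx
  funext g
  rcases gram_cases g with rfl|rfl|rfl|rfl|rfl|rfl|rfl|rfl <;>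
    simp (config := { decide := true }) [V5] <;> linarith

lemma pin6 (x : (Fin 3 → Fin 2) → ℝ) (hx : x ∈ FlowPolytope (Fin 2) 2)
    (h1 : x ![0,0,0] = 0) (h2 : x ![0,1,0] = 0) (h3 : x ![1,0,1] = 0)
    (h4 : x ![1,1,1] = 0) : x = V6 := by
  obtain ⟨-, hs, e1, e2, e3⟩ := (mem_iff x).1 hx
  funext g
  rcases gram_cases g with rfl|rfl|rfl|rfl|rfl|rfl|rfl|rfl <;>
    simp (config := { decide := true }) [V6] <;> linarith

lemma convexP : Convex ℝ (FlowPolytope (Fin 2) 2) := by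
  intro x hx y hy ta tb hta htb hab
  rw [mem_iff] at hx hy ⊢
  obtain ⟨hxn, hxs, hx1, hx2, hx3⟩ := hx
  obtain ⟨hyn, hys, hy1, hy2, hy3⟩ := hy
  have he : ∀ g, (ta • x + tb • y) g = ta * x g + tb * y g := fun g => rfl
  refine ⟨fun g => by rw [he]; have := hxn g; have := hyn g; positivity, ?_, ?_, ?_, ?_⟩ <;>
    simp only [he] <;> nlinarith [hxs, hys]

lemma zero_of_comb {a b xa xb : ℝ} (ha : 0 < a) (hxa : 0 ≤ xa) (hxb : 0 ≤ xb) (hb : 0 ≤ b)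
    (h : a * xa + b * xb = 0) : xa = 0 := by nlinarith

lemma extremeV (V : (Fin 3 → Fin 2) → ℝ) (hV : V ∈ FlowPolytope (Fin 2) 2)
    (pin : ∀ x ∈ FlowPolytope (Fin 2) 2, (∀ g, V g = 0 → x g = 0) → x = V) :
    V ∈ Set.extremePoints ℝ (FlowPolytope (Fin 2) 2) := by
  rw [mem_extremePoints]
  refine ⟨hV, fun x₁ hx₁ x₂ hx₂ hseg => ?_⟩
  obtain ⟨ta, tb, hta, htb, hab, hsum⟩ := hseg
  have hx₁n := ((mem_iff x₁).1 hx₁).1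
  have hx₂n := ((mem_iff x₂).1 hx₂).1
  have z1 : ∀ g, V g = 0 → x₁ g = 0 := by
    intro g hg
    have : ta * x₁ g + tb * x₂ g = 0 := by
      have := congrFun hsum g; simpa [hg] using this
    exact zero_of_comb hta (hx₁n g) (hx₂n g) htb.le this
  have z2 : ∀ g, V g = 0 → x₂ g = 0 := by
    intro g hg
    have : tb * x₂ g + ta * x₁ g = 0 := by
      have := congrFun hsum g
      simp only [Pi.add_apply, Pi.smul_apply, smul_eq_mul, hg] at this; linarith
    exact zero_of_comb htb (hx₂n g) (hx₁n g) hta.le this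
  exact ⟨pin x₁ hx₁ z1, pin x₂ hx₂ z2⟩

lemma exV1 : V1 ∈ Set.extremePoints ℝ (FlowPolytope (Fin 2) 2) := by
  refine extremeV V1 memV1 (fun x hx hz => pin1 x hx ?_ ?_ ?_ ?_ ?_ ?_ ?_) <;>
    exact hz _ (by simp (config := { decide := true }) [V1])
lemma exV2 : V2 ∈ Set.extremePoints ℝ (FlowPolytope (Fin 2) 2) := by
  refine extremeV V2 memV2 (fun x hx hz => pin2 x hx ?_ ?_ ?_ ?_ ?_ ?_ ?_) <;>
    exact hz _ (by simp (config := { decide := true }) [V2])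
lemma exV3 : V3 ∈ Set.extremePoints ℝ (FlowPolytope (Fin 2) 2) := by
  refine extremeV V3 memV3 (fun x hx hz => pin3 x hx ?_ ?_ ?_ ?_ ?_ ?_) <;>
    exact hz _ (by simp (config := { decide := true }) [V3])
lemma exV4 : V4 ∈ Set.extremePoints ℝ (FlowPolytope (Fin 2) 2) := by
  refine extremeV V4 memV4 (fun x hx hz => pin4 x hx ?_ ?_ ?_ ?_ ?_) <;>
    exact hz _ (by simp (config := { decide := true }) [V4])
lemma exV5 : V5 ∈ Set.extremePoints ℝ (FlowPolytope (Fin 2) 2) := by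
  refine extremeV V5 memV5 (fun x hx hz => pin5 x hx ?_ ?_ ?_ ?_ ?_) <;>
    exact hz _ (by simp (config := { decide := true }) [V5])
lemma exV6 : V6 ∈ Set.extremePoints ℝ (FlowPolytope (Fin 2) 2) := by
  refine extremeV V6 memV6 (fun x hx hz => pin6 x hx ?_ ?_ ?_ ?_) <;>
    exact hz _ (by simp (config := { decide := true }) [V6])

lemma hull_eq : FlowPolytope (Fin 2) 2 = convexHull ℝ {V1, V2, V3, V4, V5, V6} := by
  apply le_antisymm
  · intro ρ hρ
    obtain ⟨hn, hs, e1, e2, e3⟩ := (mem_iff ρ).1 hρ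
    have hb : 0 ≤ ρ ![0,0,1] := hn _
    have hd : 0 ≤ ρ ![0,1,1] := hn _
    have hc : 0 ≤ ρ ![0,1,0] := hn _
    have hf : 0 ≤ ρ ![1,0,1] := hn _
    set a := ρ ![0,0,0] with ha; set b := ρ ![0,0,1] with hbb
    set c := ρ ![0,1,0] with hcc; set d := ρ ![0,1,1] with hdd
    set h := ρ ![1,1,1] with hh
    set m := min b d with hm
    have hm0 : 0 ≤ m := le_min hb hd
    have hmb : m ≤ b := min_le_left _ _
    have hmd : m ≤ d := min_le_right _ _
    have hcbm : 0 ≤ c - b + m := by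
      rcases le_total b d with hbd | hbd
      · rw [hm, min_eq_left hbd]; linarith
      · rw [hm, min_eq_right hbd]; linarith
    set w : Fin 6 → ℝ := ![a, h, 2*(c-b+m), 3*(b-m), 3*(d-m), 4*m] with hw
    set z : Fin 6 → ((Fin 3 → Fin 2) → ℝ) := ![V1, V2, V3, V4, V5, V6] with hz
    have hwn : ∀ i ∈ Finset.univ, 0 ≤ w i := by
      intro i _
      fin_cases i
      · exact hn _
      · exact hn _
      · show (0:ℝ) ≤ 2*(c-b+m); linarith
      · show (0:ℝ) ≤ 3*(b-m); linarith
      · show (0:ℝ) ≤ 3*(d-m); linarith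
      · show (0:ℝ) ≤ 4*m; linarith
    have hws : ∑ i, w i = 1 := by
      rw [Fin.sum_univ_six]
      show a + h + 2*(c-b+m) + 3*(b-m) + 3*(d-m) + 4*m = 1
      linarith
    have hmem := Finset.centerMass_mem_convexHull (Finset.univ : Finset (Fin 6)) hwn
      (by rw [hws]; norm_num)
      (s := ({V1, V2, V3, V4, V5, V6} : Set _)) (z := z)
      (by intro i _; fin_cases i
          · exact Set.mem_insert _ _
          · exact Set.mem_insert_of_mem _ (Set.mem_insert _ _)
          · exact Set.mem_insert_of_mem _ (Set.mem_insert_of_mem _ (Set.mem_insert _ _))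
          · exact Set.mem_insert_of_mem _ (Set.mem_insert_of_mem _ (Set.mem_insert_of_mem _ (Set.mem_insert _ _)))
          · exact Set.mem_insert_of_mem _ (Set.mem_insert_of_mem _ (Set.mem_insert_of_mem _ (Set.mem_insert_of_mem _ (Set.mem_insert _ _))))
          · exact Set.mem_insert_of_mem _ (Set.mem_insert_of_mem _ (Set.mem_insert_of_mem _ (Set.mem_insert_of_mem _ (Set.mem_insert_of_mem _ rfl)))))
    rw [Finset.centerMass_eq_of_sum_1 _ _ hws, Fin.sum_univ_six] at hmem
    have hkey : ρ = a • V1 + h • V2 + (2*(c-b+m)) • V3 + (3*(b-m)) • V4 +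
        (3*(d-m)) • V5 + (4*m) • V6 := by
      funext g
      have hev : (a • V1 + h • V2 + (2*(c-b+m)) • V3 + (3*(b-m)) • V4 +
          (3*(d-m)) • V5 + (4*m) • V6) g = a * V1 g + h * V2 g + (2*(c-b+m)) * V3 g +
          (3*(b-m)) * V4 g + (3*(d-m)) * V5 g + (4*m) * V6 g := rfl
      rw [hev]
      rcases gram_cases g with hg|hg|hg|hg|hg|hg|hg|hg <;> rw [hg] <;>
        simp (config := { decide := true }) only [V1, V2, V3, V4, V5, V6, if_true, if_false,
          or_self, or_false, false_or] <;>
        rcases le_total b d with hbd | hbd <;>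
        [linarith [hm.trans (min_eq_left hbd)]; linarith [hm.trans (min_eq_right hbd)];
         linarith [hm.trans (min_eq_left hbd)]; linarith [hm.trans (min_eq_right hbd)];
         linarith [hm.trans (min_eq_left hbd)]; linarith [hm.trans (min_eq_right hbd)];
         linarith [hm.trans (min_eq_left hbd)]; linarith [hm.trans (min_eq_right hbd)];
         linarith [hm.trans (min_eq_left hbd)]; linarith [hm.trans (min_eq_right hbd)];
         linarith [hm.trans (min_eq_left hbd)]; linarith [hm.trans (min_eq_right hbd)];
         linarith [hm.trans (min_eq_left hbd)]; linarith [hm.trans (min_eq_right hbd)];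
         linarith [hm.trans (min_eq_left hbd)]; linarith [hm.trans (min_eq_right hbd)]]
    exact hkey ▸ hmem
  · apply convexHull_min ?_ convexP
    rintro v (rfl | rfl | rfl | rfl | rfl | rfl)
    exacts [memV1, memV2, memV3, memV4, memV5, memV6]

lemma exEq : Set.extremePoints ℝ (FlowPolytope (Fin 2) 2) = {V1, V2, V3, V4, V5, V6} := by
  apply subset_antisymm
  · rw [hull_eq]; exact extremePoints_convexHull_subset
  · rintro v (rfl | rfl | rfl | rfl | rfl | rfl)
    exacts [exV1, exV2, exV3, exV4, exV5, exV6]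

lemma neq_of_val {x y : (Fin 3 → Fin 2) → ℝ} (g : Fin 3 → Fin 2) (h : x g ≠ y g) : x ≠ y :=
  fun he => h (congrFun he g)

lemma pairwise_ne : List.Pairwise (· ≠ ·) [V1, V2, V3, V4, V5, V6] := by
  refine List.Pairwise.cons ?_ (List.Pairwise.cons ?_ (List.Pairwise.cons ?_
    (List.Pairwise.cons ?_ (List.Pairwise.cons ?_ (List.pairwise_singleton _ _)))))
  · intro v hv; fin_cases hv <;>
      exact neq_of_val ![0,0,0]
        (by simp (config := { decide := true }) [V1,V2,V3,V4,V5,V6])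
  · intro v hv; fin_cases hv <;>
      exact neq_of_val ![1,1,1]
        (by simp (config := { decide := true }) [V2,V3,V4,V5,V6])
  · intro v hv; fin_cases hv <;>
      exact neq_of_val ![0,1,0]
        (by simp (config := { decide := true }) [V3,V4,V5,V6])
  · intro v hv; fin_cases hv <;>
      exact neq_of_val ![0,0,1]
        (by simp (config := { decide := true }) [V4,V5,V6])
  · intro v hv; fin_cases hv
    exact neq_of_val ![1,0,1]
      (by simp (config := { decide := true }) [V5,V6])

noncomputable def wa : (Fin 3 → Fin 2) → ℝ :=
  fun g => if g = ![0,0,0] then 1 else if g = ![1,1,1] then -1 else 0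
noncomputable def wb : (Fin 3 → Fin 2) → ℝ :=
  fun g => if g = ![0,0,1] ∨ g = ![1,0,0] then 1 else if g = ![1,0,1] ∨ g = ![1,1,1] then -1 else 0
noncomputable def wc : (Fin 3 → Fin 2) → ℝ :=
  fun g => if g = ![0,1,0] ∨ g = ![1,0,1] then 1 else if g = ![1,1,1] then -2 else 0
noncomputable def wd : (Fin 3 → Fin 2) → ℝ :=
  fun g => if g = ![0,1,1] ∨ g = ![1,1,0] ∨ g = ![1,0,1] then 1 else if g = ![1,1,1] then -3 else 0

lemma indep_u : LinearIndependent ℝ ![V2 - V1, V3 - V1, V4 - V1, V6 - V1] := by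
  rw [Fintype.linearIndependent_iff]
  intro q hq
  rw [Fin.sum_univ_four] at hq
  have e : q 0 • (V2 - V1) + q 1 • (V3 - V1) + q 2 • (V4 - V1) + q 3 • (V6 - V1) = 0 := hq
  have h1 := congrFun e ![1,1,1]
  have h2 := congrFun e ![1,0,1]
  have h3 := congrFun e ![0,1,1]
  have h4 := congrFun e ![0,0,1]
  simp (config := { decide := true }) [V1, V2, V3, V4, V6] at h1 h2 h3 h4
  intro i; fin_cases i <;> simp <;> linarith

lemma indep_w : LinearIndependent ℝ ![wa, wb, wc, wd] := by
  rw [Fintype.linearIndependent_iff]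
  intro q hq
  rw [Fin.sum_univ_four] at hq
  have e : q 0 • wa + q 1 • wb + q 2 • wc + q 3 • wd = 0 := hq
  have h1 := congrFun e ![0,0,0]
  have h2 := congrFun e ![0,0,1]
  have h3 := congrFun e ![0,1,0]
  have h4 := congrFun e ![0,1,1]
  simp (config := { decide := true }) [wa, wb, wc, wd] at h1 h2 h3 h4
  intro i; fin_cases i <;> simp <;> linarith

lemma dim4 : Module.finrank ℝ (affineSpan ℝ (FlowPolytope (Fin 2) 2)).direction = 4 := by
  rw [direction_affineSpan]
  apply le_antisymm
  · have hle : vectorSpan ℝ (FlowPolytope (Fin 2) 2) ≤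
        Submodule.span ℝ (Set.range ![wa, wb, wc, wd]) := by
      rw [vectorSpan_def, Submodule.span_le]
      rintro v ⟨x, hx, y, hy, rfl⟩
      obtain ⟨hxn, hxs, hx1, hx2, hx3⟩ := (mem_iff x).1 hx
      obtain ⟨hyn, hys, hy1, hy2, hy3⟩ := (mem_iff y).1 hy
      have key : x -ᵥ y = (x ![0,0,0] - y ![0,0,0]) • wa + (x ![0,0,1] - y ![0,0,1]) • wb +
          (x ![0,1,0] - y ![0,1,0]) • wc + (x ![0,1,1] - y ![0,1,1]) • wd := by
        funext g
        have hev : ∀ g', ((x ![0,0,0] - y ![0,0,0]) • wa + (x ![0,0,1] - y ![0,0,1]) • wb +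
            (x ![0,1,0] - y ![0,1,0]) • wc + (x ![0,1,1] - y ![0,1,1]) • wd) g' =
            (x ![0,0,0] - y ![0,0,0]) * wa g' + (x ![0,0,1] - y ![0,0,1]) * wb g' +
            (x ![0,1,0] - y ![0,1,0]) * wc g' + (x ![0,1,1] - y ![0,1,1]) * wd g' := fun _ => rfl
        rw [hev]
        have hxy : (x -ᵥ y) g = x g - y g := rfl
        rw [hxy]
        rcases gram_cases g with hg|hg|hg|hg|hg|hg|hg|hg <;> rw [hg] <;>
          simp (config := { decide := true }) only [wa, wb, wc, wd, if_true, if_false,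
            or_self, or_false, false_or, or_true, true_or] <;> ring_nf <;> linarith
      show x -ᵥ y ∈ _
      rw [key]
      have hmem : ∀ i : Fin 4, ![wa, wb, wc, wd] i ∈ Submodule.span ℝ (Set.range ![wa, wb, wc, wd]) :=
        fun i => Submodule.subset_span ⟨i, rfl⟩
      exact Submodule.add_mem _ (Submodule.add_mem _ (Submodule.add_mem _
        (Submodule.smul_mem _ _ (hmem 0)) (Submodule.smul_mem _ _ (hmem 1)))
        (Submodule.smul_mem _ _ (hmem 2))) (Submodule.smul_mem _ _ (hmem 3))
    calc Module.finrank ℝ (vectorSpan ℝ (FlowPolytope (Fin 2) 2))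
        ≤ Module.finrank ℝ (Submodule.span ℝ (Set.range ![wa, wb, wc, wd])) :=
          Submodule.finrank_mono hle
      _ = 4 := by rw [finrank_span_eq_card indep_w]; simp
  · have hle : Submodule.span ℝ (Set.range ![V2 - V1, V3 - V1, V4 - V1, V6 - V1]) ≤
        vectorSpan ℝ (FlowPolytope (Fin 2) 2) := by
      rw [Submodule.span_le]
      rintro v ⟨i, rfl⟩
      fin_cases i
      · exact vsub_mem_vectorSpan ℝ memV2 memV1
      · exact vsub_mem_vectorSpan ℝ memV3 memV1
      · exact vsub_mem_vectorSpan ℝ memV4 memV1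
      · exact vsub_mem_vectorSpan ℝ memV6 memV1
    calc (4 : ℕ) = Module.finrank ℝ (Submodule.span ℝ
          (Set.range ![V2 - V1, V3 - V1, V4 - V1, V6 - V1])) := by
          rw [finrank_span_eq_card indep_u]; simp
      _ ≤ Module.finrank ℝ (vectorSpan ℝ (FlowPolytope (Fin 2) 2)) := Submodule.finrank_mono hle
end BTP


/-- For the binary alphabet and order `n = 3` (contexts of length
`k = 2`), the polytope of trigram distributions satisfying flow balance is a
4-dimensional convex polytope with exactly six extreme points, namely
`V1, …, V6` above (which are pairwise distinct); and each extreme point is the trigram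
distribution of a periodic binary sequence in which each visited length-2 context has
a unique next token. -/
theorem binary_trigram_polytope :
    Convex ℝ (FlowPolytope (Fin 2) 2) ∧
    Module.finrank ℝ (affineSpan ℝ (FlowPolytope (Fin 2) 2)).direction = 4 ∧
    Set.extremePoints ℝ (FlowPolytope (Fin 2) 2) = {V1, V2, V3, V4, V5, V6} ∧
    List.Pairwise (· ≠ ·) [V1, V2, V3, V4, V5, V6] ∧
    (∀ ρ ∈ Set.extremePoints ℝ (FlowPolytope (Fin 2) 2),
      ∃ (p : ℕ) (_ : 0 < p) (w : ℕ → Fin 2),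
        (∀ i, w (i + p) = w i) ∧
        (∀ i j, i < p → j < p → w i = w j → w (i + 1) = w (j + 1) →
          w (i + 2) = w (j + 2)) ∧
        ρ = fun g =>
          (∑ i ∈ Finset.range p,
            if (∀ t : Fin 3, w (i + (t : ℕ)) = g t) then (1 : ℝ) else 0) / p) := by
  refine ⟨BTP.convexP, BTP.dim4, BTP.exEq, BTP.pairwise_ne, ?_⟩
  intro ρ hρ
  rw [BTP.exEq] at hρ
  rcases hρ with rfl | rfl | rfl | rfl | rfl | rfl
  · refine ⟨1, one_pos, fun _ => 0, ?_, ?_, ?_⟩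
    · intro i; simp [Nat.add_mod_right]
    · intro i j hi hj h1 h2; interval_cases i <;> interval_cases j <;>
        first | rfl | (revert h1 h2; decide)
    · funext g
      rcases BTP.gram_cases g with hg|hg|hg|hg|hg|hg|hg|hg
      · rw [hg, Finset.sum_range_succ, Finset.sum_range_zero, if_pos (by decide)]
        simp (config := { decide := true }) [V1]
        try norm_num
      · rw [hg, Finset.sum_range_succ, Finset.sum_range_zero, if_neg (by decide)]
        simp (config := { decide := true }) [V1]
        try norm_num
      · rw [hg, Finset.sum_range_succ, Finset.sum_range_zero, if_neg (by decide)]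
        simp (config := { decide := true }) [V1]
        try norm_num
      · rw [hg, Finset.sum_range_succ, Finset.sum_range_zero, if_neg (by decide)]
        simp (config := { decide := true }) [V1]
        try norm_num
      · rw [hg, Finset.sum_range_succ, Finset.sum_range_zero, if_neg (by decide)]
        simp (config := { decide := true }) [V1]
        try norm_num
      · rw [hg, Finset.sum_range_succ, Finset.sum_range_zero, if_neg (by decide)]
        simp (config := { decide := true }) [V1]
        try norm_num
      · rw [hg, Finset.sum_range_succ, Finset.sum_range_zero, if_neg (by decide)]
        simp (config := { decide := true }) [V1]
        try norm_num
      · rw [hg, Finset.sum_range_succ, Finset.sum_range_zero, if_neg (by decide)]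
        simp (config := { decide := true }) [V1]
        try norm_num
  · refine ⟨1, one_pos, fun _ => 1, ?_, ?_, ?_⟩
    · intro i; simp [Nat.add_mod_right]
    · intro i j hi hj h1 h2; interval_cases i <;> interval_cases j <;>
        first | rfl | (revert h1 h2; decide)
    · funext g
      rcases BTP.gram_cases g with hg|hg|hg|hg|hg|hg|hg|hg
      · rw [hg, Finset.sum_range_succ, Finset.sum_range_zero, if_neg (by decide)]
        simp (config := { decide := true }) [V2]
        try norm_num
      · rw [hg, Finset.sum_range_succ, Finset.sum_range_zero, if_neg (by decide)]
        simp (config := { decide := true }) [V2]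
        try norm_num
      · rw [hg, Finset.sum_range_succ, Finset.sum_range_zero, if_neg (by decide)]
        simp (config := { decide := true }) [V2]
        try norm_num
      · rw [hg, Finset.sum_range_succ, Finset.sum_range_zero, if_neg (by decide)]
        simp (config := { decide := true }) [V2]
        try norm_num
      · rw [hg, Finset.sum_range_succ, Finset.sum_range_zero, if_neg (by decide)]
        simp (config := { decide := true }) [V2]
        try norm_num
      · rw [hg, Finset.sum_range_succ, Finset.sum_range_zero, if_neg (by decide)]
        simp (config := { decide := true }) [V2]
        try norm_num
      · rw [hg, Finset.sum_range_succ, Finset.sum_range_zero, if_neg (by decide)]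
        simp (config := { decide := true }) [V2]
        try norm_num
      · rw [hg, Finset.sum_range_succ, Finset.sum_range_zero, if_pos (by decide)]
        simp (config := { decide := true }) [V2]
        try norm_num
  · refine ⟨2, two_pos, fun i => if i % 2 = 0 then 0 else 1, ?_, ?_, ?_⟩
    · intro i; simp [Nat.add_mod_right]
    · intro i j hi hj h1 h2; interval_cases i <;> interval_cases j <;>
        first | rfl | (revert h1 h2; decide)
    · funext g
      rcases BTP.gram_cases g with hg|hg|hg|hg|hg|hg|hg|hg
      · rw [hg, Finset.sum_range_succ, Finset.sum_range_succ, Finset.sum_range_zero, if_neg (by decide), if_neg (by decide)]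
        simp (config := { decide := true }) [V3]
        try norm_num
      · rw [hg, Finset.sum_range_succ, Finset.sum_range_succ, Finset.sum_range_zero, if_neg (by decide), if_neg (by decide)]
        simp (config := { decide := true }) [V3]
        try norm_num
      · rw [hg, Finset.sum_range_succ, Finset.sum_range_succ, Finset.sum_range_zero, if_pos (by decide), if_neg (by decide)]
        simp (config := { decide := true }) [V3]
        try norm_num
      · rw [hg, Finset.sum_range_succ, Finset.sum_range_succ, Finset.sum_range_zero, if_neg (by decide), if_neg (by decide)]
        simp (config := { decide := true }) [V3]
        try norm_num
      · rw [hg, Finset.sum_range_succ, Finset.sum_range_succ, Finset.sum_range_zero, if_neg (by decide), if_neg (by decide)]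
        simp (config := { decide := true }) [V3]
        try norm_num
      · rw [hg, Finset.sum_range_succ, Finset.sum_range_succ, Finset.sum_range_zero, if_neg (by decide), if_pos (by decide)]
        simp (config := { decide := true }) [V3]
        try norm_num
      · rw [hg, Finset.sum_range_succ, Finset.sum_range_succ, Finset.sum_range_zero, if_neg (by decide), if_neg (by decide)]
        simp (config := { decide := true }) [V3]
        try norm_num
      · rw [hg, Finset.sum_range_succ, Finset.sum_range_succ, Finset.sum_range_zero, if_neg (by decide), if_neg (by decide)]
        simp (config := { decide := true }) [V3]
        try norm_num
  · refine ⟨3, three_pos, fun i => if i % 3 = 2 then 1 else 0, ?_, ?_, ?_⟩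
    · intro i; simp [Nat.add_mod_right]
    · intro i j hi hj h1 h2; interval_cases i <;> interval_cases j <;>
        first | rfl | (revert h1 h2; decide)
    · funext g
      rcases BTP.gram_cases g with hg|hg|hg|hg|hg|hg|hg|hg
      · rw [hg, Finset.sum_range_succ, Finset.sum_range_succ, Finset.sum_range_succ, Finset.sum_range_zero, if_neg (by decide), if_neg (by decide), if_neg (by decide)]
        simp (config := { decide := true }) [V4]
        try norm_num
      · rw [hg, Finset.sum_range_succ, Finset.sum_range_succ, Finset.sum_range_succ, Finset.sum_range_zero, if_pos (by decide), if_neg (by decide), if_neg (by decide)]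
        simp (config := { decide := true }) [V4]
        try norm_num
      · rw [hg, Finset.sum_range_succ, Finset.sum_range_succ, Finset.sum_range_succ, Finset.sum_range_zero, if_neg (by decide), if_pos (by decide), if_neg (by decide)]
        simp (config := { decide := true }) [V4]
        try norm_num
      · rw [hg, Finset.sum_range_succ, Finset.sum_range_succ, Finset.sum_range_succ, Finset.sum_range_zero, if_neg (by decide), if_neg (by decide), if_neg (by decide)]
        simp (config := { decide := true }) [V4]
        try norm_num
      · rw [hg, Finset.sum_range_succ, Finset.sum_range_succ, Finset.sum_range_succ, Finset.sum_range_zero, if_neg (by decide), if_neg (by decide), if_pos (by decide)]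
        simp (config := { decide := true }) [V4]
        try norm_num
      · rw [hg, Finset.sum_range_succ, Finset.sum_range_succ, Finset.sum_range_succ, Finset.sum_range_zero, if_neg (by decide), if_neg (by decide), if_neg (by decide)]
        simp (config := { decide := true }) [V4]
        try norm_num
      · rw [hg, Finset.sum_range_succ, Finset.sum_range_succ, Finset.sum_range_succ, Finset.sum_range_zero, if_neg (by decide), if_neg (by decide), if_neg (by decide)]
        simp (config := { decide := true }) [V4]
        try norm_num
      · rw [hg, Finset.sum_range_succ, Finset.sum_range_succ, Finset.sum_range_succ, Finset.sum_range_zero, if_neg (by decide), if_neg (by decide), if_neg (by decide)]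
        simp (config := { decide := true }) [V4]
        try norm_num
  · refine ⟨3, three_pos, fun i => if i % 3 = 0 then 0 else 1, ?_, ?_, ?_⟩
    · intro i; simp [Nat.add_mod_right]
    · intro i j hi hj h1 h2; interval_cases i <;> interval_cases j <;>
        first | rfl | (revert h1 h2; decide)
    · funext g
      rcases BTP.gram_cases g with hg|hg|hg|hg|hg|hg|hg|hg
      · rw [hg, Finset.sum_range_succ, Finset.sum_range_succ, Finset.sum_range_succ, Finset.sum_range_zero, if_neg (by decide), if_neg (by decide), if_neg (by decide)]
        simp (config := { decide := true }) [V5]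
        try norm_num
      · rw [hg, Finset.sum_range_succ, Finset.sum_range_succ, Finset.sum_range_succ, Finset.sum_range_zero, if_neg (by decide), if_neg (by decide), if_neg (by decide)]
        simp (config := { decide := true }) [V5]
        try norm_num
      · rw [hg, Finset.sum_range_succ, Finset.sum_range_succ, Finset.sum_range_succ, Finset.sum_range_zero, if_neg (by decide), if_neg (by decide), if_neg (by decide)]
        simp (config := { decide := true }) [V5]
        try norm_num
      · rw [hg, Finset.sum_range_succ, Finset.sum_range_succ, Finset.sum_range_succ, Finset.sum_range_zero, if_pos (by decide), if_neg (by decide), if_neg (by decide)]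
        simp (config := { decide := true }) [V5]
        try norm_num
      · rw [hg, Finset.sum_range_succ, Finset.sum_range_succ, Finset.sum_range_succ, Finset.sum_range_zero, if_neg (by decide), if_neg (by decide), if_neg (by decide)]
        simp (config := { decide := true }) [V5]
        try norm_num
      · rw [hg, Finset.sum_range_succ, Finset.sum_range_succ, Finset.sum_range_succ, Finset.sum_range_zero, if_neg (by decide), if_neg (by decide), if_pos (by decide)]
        simp (config := { decide := true }) [V5]
        try norm_num
      · rw [hg, Finset.sum_range_succ, Finset.sum_range_succ, Finset.sum_range_succ, Finset.sum_range_zero, if_neg (by decide), if_pos (by decide), if_neg (by decide)]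
        simp (config := { decide := true }) [V5]
        try norm_num
      · rw [hg, Finset.sum_range_succ, Finset.sum_range_succ, Finset.sum_range_succ, Finset.sum_range_zero, if_neg (by decide), if_neg (by decide), if_neg (by decide)]
        simp (config := { decide := true }) [V5]
        try norm_num
  · refine ⟨4, four_pos, fun i => if i % 4 < 2 then 0 else 1, ?_, ?_, ?_⟩
    · intro i; simp [Nat.add_mod_right]
    · intro i j hi hj h1 h2; interval_cases i <;> interval_cases j <;>
        first | rfl | (revert h1 h2; decide)
    · funext g
      rcases BTP.gram_cases g with hg|hg|hg|hg|hg|hg|hg|hg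
      · rw [hg, Finset.sum_range_succ, Finset.sum_range_succ, Finset.sum_range_succ, Finset.sum_range_succ, Finset.sum_range_zero, if_neg (by decide), if_neg (by decide), if_neg (by decide), if_neg (by decide)]
        simp (config := { decide := true }) [V6]
        try norm_num
      · rw [hg, Finset.sum_range_succ, Finset.sum_range_succ, Finset.sum_range_succ, Finset.sum_range_succ, Finset.sum_range_zero, if_pos (by decide), if_neg (by decide), if_neg (by decide), if_neg (by decide)]
        simp (config := { decide := true }) [V6]
        try norm_num
      · rw [hg, Finset.sum_range_succ, Finset.sum_range_succ, Finset.sum_range_succ, Finset.sum_range_succ, Finset.sum_range_zero, if_neg (by decide), if_neg (by decide), if_neg (by decide), if_neg (by decide)]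
        simp (config := { decide := true }) [V6]
        try norm_num
      · rw [hg, Finset.sum_range_succ, Finset.sum_range_succ, Finset.sum_range_succ, Finset.sum_range_succ, Finset.sum_range_zero, if_neg (by decide), if_pos (by decide), if_neg (by decide), if_neg (by decide)]
        simp (config := { decide := true }) [V6]
        try norm_num
      · rw [hg, Finset.sum_range_succ, Finset.sum_range_succ, Finset.sum_range_succ, Finset.sum_range_succ, Finset.sum_range_zero, if_neg (by decide), if_neg (by decide), if_neg (by decide), if_pos (by decide)]
        simp (config := { decide := true }) [V6]
        try norm_num
      · rw [hg, Finset.sum_range_succ, Finset.sum_range_succ, Finset.sum_range_succ, Finset.sum_range_succ, Finset.sum_range_zero, if_neg (by decide), if_neg (by decide), if_neg (by decide), if_neg (by decide)]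
        simp (config := { decide := true }) [V6]
        try norm_num
      · rw [hg, Finset.sum_range_succ, Finset.sum_range_succ, Finset.sum_range_succ, Finset.sum_range_succ, Finset.sum_range_zero, if_neg (by decide), if_neg (by decide), if_pos (by decide), if_neg (by decide)]
        simp (config := { decide := true }) [V6]
        try norm_num
      · rw [hg, Finset.sum_range_succ, Finset.sum_range_succ, Finset.sum_range_succ, Finset.sum_range_succ, Finset.sum_range_zero, if_neg (by decide), if_neg (by decide), if_neg (by decide), if_neg (by decide)]
        simp (config := { decide := true }) [V6]
        try norm_num
end

section
/- Let γ be a simple directed cycle of length p in the de Bruijn graph B(n−1,s), and let x₁x₂⋯x_p be the associated periodic token sequence of minimal period p (whose p consecutive cyclic length-n windows are the p distinct n-grams traversed by γ). Then for every j ≥ n: the p cyclic length-j windows of this periodic sequence are pairwise distinct; the induced j-gram distribution, which assigns mass 1/p to each of these p windows, is an extreme point of the polytope F_j of j-gram distributions satisfying flow balance; and distinct simple cycles in B(n−1,s) induce distinct j-gram distributions. -/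
/-!
`n`-gram distributions and flow balance on the de Bruijn graph.

We fix a finite alphabet `σ` with `s = |σ| ≥ 2` and an order `n = k + 1 ≥ 2`
(so contexts have length `k = n − 1 ≥ 1`).  An `n`-gram is a function
`Fin (k+1) → σ`; a context is a function `Fin k → σ`.  For an `n`-gram `g`,
`gInit g` is its length-`k` prefix (the source vertex of the corresponding
de Bruijn edge) and `gTail g` its length-`k` suffix (the target vertex).
The `n`-gram `c·a` is `Fin.snoc c a` and `x·c` is `Fin.cons x c`; the shift
`σ(c,a)` is `gTail (Fin.snoc c a)`.
-/

open Finset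

variable {σ : Type*}

attribute [local instance] Classical.propDecidable

attribute [local instance] Classical.propDecidable

/-- The `j`-gram distribution induced by a periodic word `w` of (minimal) period `p`:
the uniform distribution, with mass `1/p`, on the `p` cyclic length-`j` windows of `w`
(here `j = K + 1`). -/
noncomputable def windowDist {σ : Type*} (w : ℕ → σ) (p : ℕ) (K : ℕ) :
    (Fin (K + 1) → σ) → ℝ :=
  fun g => if ∃ i < p, ∀ t : Fin (K + 1), w (i + (t : ℕ)) = g t then 1 / (p : ℝ) else 0

section CycleAux
variable {α : Type*} [Fintype α] [DecidableEq α]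

private lemma wmod {w : ℕ → α} {p : ℕ} (hper : ∀ i, w (i + p) = w i) (m : ℕ) :
    w (m % p) = w m := Function.Periodic.map_mod_nat hper m

private lemma succ_mod_inj {p i j : ℕ} (hi : i < p) (hj : j < p)
    (h : (i + 1) % p = (j + 1) % p) : i = j := by
  have h2 : i % p = j % p :=
    Nat.ModEq.add_right_cancel' 1 (h : (i+1) ≡ (j+1) [MOD p])
  rwa [Nat.mod_eq_of_lt hi, Nat.mod_eq_of_lt hj] at h2

private lemma extreme_main {w : ℕ → α} {p K : ℕ} (hp : 0 < p)
    (hper : ∀ i, w (i + p) = w i)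
    (hvert : ∀ i j, i < p → j < p →
      (∀ t : Fin K, w (i + (t : ℕ)) = w (j + (t : ℕ))) → i = j) :
    windowDist w p K ∈ Set.extremePoints ℝ (FlowPolytope α K) := by
  classical
  set E : ℕ → (Fin (K+1) → α) := fun i t => w (i + (t : ℕ)) with hE
  set C : ℕ → (Fin K → α) := fun i t => w (i + (t : ℕ)) with hC
  have hCmod : ∀ m, C (m % p) = C m := by
    intro m; funext t
    show w (m % p + (t:ℕ)) = w (m + (t:ℕ))
    rw [← wmod hper (m % p + (t:ℕ)), Nat.mod_add_mod, wmod hper]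
  have hCinj : ∀ i j, i < p → j < p → C i = C j → i = j :=
    fun i j hi hj h => hvert i j hi hj (fun t => congrFun h t)
  have hEinj : ∀ i j, i < p → j < p → E i = E j → i = j := by
    intro i j hi hj h
    refine hvert i j hi hj (fun t => ?_)
    have := congrFun h t.castSucc
    simpa [hE] using this
  have hgInit : ∀ i, gInit (E i) = C i := fun i => by
    funext t; simp [gInit, hE, hC]
  have hgTail : ∀ i, gTail (E i) = C (i+1) := by
    intro i; funext t
    show w (i + ((t.succ : Fin (K+1)) : ℕ)) = w (i + 1 + (t:ℕ))
    exact congrArg w (by simp [Fin.val_succ]; omega)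
  have hsnoc : ∀ i, Fin.snoc (C i) (w (i + K)) = E i := by
    intro i; funext t
    refine Fin.lastCases ?_ ?_ t
    · simp [hE]
    · intro t'; simp [Fin.snoc_castSucc, hE, hC]
  have hcons : ∀ i, Fin.cons (w i) (C (i+1)) = E i := by
    intro i; funext t
    refine Fin.cases ?_ ?_ t
    · simp [hE]
    · intro t'
      simp only [Fin.cons_succ]
      show w (i + 1 + (t':ℕ)) = w (i + ((t'.succ : Fin (K+1)) : ℕ))
      exact congrArg w (by simp [Fin.val_succ]; omega)
  have hgInitSnoc : ∀ (c : Fin K → α) a, gInit (Fin.snoc c a) = c := by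
    intro c a; funext t; simp [gInit]
  have hgTailCons : ∀ (x : α) (c : Fin K → α), gTail (Fin.cons x c) = c := by
    intro x c; funext t; simp [gTail]
  set T : Finset (Fin (K+1) → α) := (Finset.range p).image E with hT
  have hmemT : ∀ g, g ∈ T ↔ ∃ i < p, ∀ t : Fin (K + 1), w (i + (t : ℕ)) = g t := by
    intro g
    rw [hT, Finset.mem_image]
    constructor
    · rintro ⟨i, hi, rfl⟩; exact ⟨i, Finset.mem_range.mp hi, fun t => rfl⟩
    · rintro ⟨i, hi, h⟩; exact ⟨i, Finset.mem_range.mpr hi, funext h⟩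
  have hρ : ∀ g, windowDist w p K g = if g ∈ T then 1 / (p:ℝ) else 0 := by
    intro g
    unfold windowDist
    by_cases h : g ∈ T
    · rw [if_pos ((hmemT g).mp h), if_pos h]
    · rw [if_neg (fun hc => h ((hmemT g).mpr hc)), if_neg h]
  have hEmemT : ∀ i, i < p → E i ∈ T := fun i hi =>
    Finset.mem_image.mpr ⟨i, Finset.mem_range.mpr hi, rfl⟩
  have hsupρ : ∀ g, g ∉ T → windowDist w p K g = 0 := fun g hg => by
    rw [hρ g, if_neg hg]
  have hpR : (p : ℝ) ≠ 0 := Nat.cast_ne_zero.mpr hp.ne'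
  have hsum : ∀ x : (Fin (K+1) → α) → ℝ, (∀ g, g ∉ T → x g = 0) →
      ∑ g, x g = ∑ i ∈ Finset.range p, x (E i) := by
    intro x hx
    have h1 : ∑ g, x g = ∑ g ∈ T, x g :=
      (Finset.sum_subset (Finset.subset_univ T) (fun g _ hg => hx g hg)).symm
    rw [h1, hT]
    exact Finset.sum_image (fun i hi j hj h =>
      hEinj i j (Finset.mem_range.mp hi) (Finset.mem_range.mp hj) h)
  have claimL : ∀ x : (Fin (K+1) → α) → ℝ, (∀ g, g ∉ T → x g = 0) →
      ∀ i, i < p → Lmass x (C i) = x (E i) := by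
    intro x hx i hi
    unfold Lmass
    have hval : x (Fin.snoc (C i) (w (i + K))) = x (E i) := by rw [hsnoc]
    rw [← hval]
    refine Finset.sum_eq_single (w (i + K)) ?_ (fun h => absurd (Finset.mem_univ _) h)
    intro a _ ha
    by_contra h0
    have hmem : Fin.snoc (C i) a ∈ T := by
      by_contra hm; exact h0 (hx _ hm)
    obtain ⟨j, hjr, hje⟩ := Finset.mem_image.mp hmem
    have hj : j < p := Finset.mem_range.mp hjr
    have hcj : C j = C i := by rw [← hgInit j, hje, hgInitSnoc]
    have hji : j = i := hCinj j i hj hi hcj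
    subst hji
    apply ha
    have := congrFun hje (Fin.last K)
    simpa [hE, Fin.snoc_last] using this.symm
  have claimR : ∀ x : (Fin (K+1) → α) → ℝ, (∀ g, g ∉ T → x g = 0) →
      ∀ i, i < p → Rmass x (C (i + 1)) = x (E i) := by
    intro x hx i hi
    unfold Rmass
    have hval : x (Fin.cons (w i) (C (i + 1))) = x (E i) := by rw [hcons]
    rw [← hval]
    refine Finset.sum_eq_single (w i) ?_ (fun h => absurd (Finset.mem_univ _) h)
    intro a _ ha
    by_contra h0
    have hmem : Fin.cons a (C (i + 1)) ∈ T := by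
      by_contra hm; exact h0 (hx _ hm)
    obtain ⟨j, hjr, hje⟩ := Finset.mem_image.mp hmem
    have hj : j < p := Finset.mem_range.mp hjr
    have hcj : C (j + 1) = C (i + 1) := by rw [← hgTail j, hje, hgTailCons]
    have hmodeq : (j + 1) % p = (i + 1) % p := by
      apply hCinj _ _ (Nat.mod_lt _ hp) (Nat.mod_lt _ hp)
      rw [hCmod, hCmod, hcj]
    have hji : j = i := succ_mod_inj hj hi hmodeq
    subst hji
    apply ha
    have := congrFun hje (0 : Fin (K+1))
    simpa [hE, Fin.cons_zero] using this.symm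
  have claimL0 : ∀ x : (Fin (K+1) → α) → ℝ, (∀ g, g ∉ T → x g = 0) →
      ∀ c, (∀ i, i < p → C i ≠ c) → Lmass x c = 0 := by
    intro x hx c hc
    refine Finset.sum_eq_zero (fun a _ => ?_)
    by_contra h0
    have hmem : Fin.snoc c a ∈ T := by by_contra hm; exact h0 (hx _ hm)
    obtain ⟨j, hjr, hje⟩ := Finset.mem_image.mp hmem
    exact hc j (Finset.mem_range.mp hjr) (by rw [← hgInit j, hje, hgInitSnoc])
  have claimR0 : ∀ x : (Fin (K+1) → α) → ℝ, (∀ g, g ∉ T → x g = 0) →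
      ∀ c, (∀ i, i < p → C i ≠ c) → Rmass x c = 0 := by
    intro x hx c hc
    refine Finset.sum_eq_zero (fun a _ => ?_)
    by_contra h0
    have hmem : Fin.cons a c ∈ T := by by_contra hm; exact h0 (hx _ hm)
    obtain ⟨j, hjr, hje⟩ := Finset.mem_image.mp hmem
    have hj : j < p := Finset.mem_range.mp hjr
    refine hc ((j+1) % p) (Nat.mod_lt _ hp) ?_
    rw [hCmod, ← hgTail j, hje, hgTailCons]
  -- membership of windowDist in the polytope
  have hmemP : windowDist w p K ∈ FlowPolytope α K := by
    refine ⟨⟨fun g => ?_, ?_⟩, ?_⟩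
    · rw [hρ g]; split
      · positivity
      · exact le_rfl
    · rw [hsum _ hsupρ]
      have : ∀ i ∈ Finset.range p, windowDist w p K (E i) = 1 / (p:ℝ) := by
        intro i hi; rw [hρ, if_pos (hEmemT i (Finset.mem_range.mp hi))]
      rw [Finset.sum_congr rfl this, Finset.sum_const, Finset.card_range, nsmul_eq_mul]
      field_simp
    · intro c
      by_cases hc : ∃ i, i < p ∧ C i = c
      · obtain ⟨i, hi, rfl⟩ := hc
        rw [claimL _ hsupρ i hi]
        set j := (i + (p-1)) % p with hjdef
        have hj : j < p := Nat.mod_lt _ hp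
        have hj1 : (j + 1) % p = i := by
          rw [hjdef, Nat.mod_add_mod]
          have h5 : i + (p - 1) + 1 = i + p := by omega
          rw [h5, Nat.add_mod_right, Nat.mod_eq_of_lt hi]
        have hCj : C (j + 1) = C i := by rw [← hCmod (j+1), hj1]
        rw [← hCj, claimR _ hsupρ j hj, hρ, hρ,
          if_pos (hEmemT i hi), if_pos (hEmemT j hj)]
      · push_neg at hc
        rw [claimL0 _ hsupρ c hc, claimR0 _ hsupρ c hc]
  -- rigidity: any flow supported on T equals windowDist
  have hconst : ∀ x : (Fin (K+1) → α) → ℝ, x ∈ FlowPolytope α K →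
      (∀ g, g ∉ T → x g = 0) → x = windowDist w p K := by
    intro x hxP hxs
    obtain ⟨⟨hxnn, hxsum⟩, hxfb⟩ := hxP
    have key : ∀ i, i < p → x (E ((i + 1) % p)) = x (E i) := by
      intro i hi
      have h1 : Lmass x (C ((i+1) % p)) = x (E ((i+1) % p)) :=
        claimL x hxs _ (Nat.mod_lt _ hp)
      have h2 : Rmass x (C ((i+1) % p)) = x (E i) := by
        rw [hCmod]; exact claimR x hxs i hi
      rw [← h1, hxfb, h2]
    have key2 : ∀ m : ℕ, x (E (m % p)) = x (E 0) := by
      intro m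
      induction m with
      | zero => rw [Nat.zero_mod]
      | succ m ih =>
        have h3 : (m % p + 1) % p = (m + 1) % p := Nat.mod_add_mod m p 1
        rw [← h3, key (m % p) (Nat.mod_lt _ hp), ih]
    have keyi : ∀ i, i < p → x (E i) = x (E 0) := by
      intro i hi
      have := key2 i
      rwa [Nat.mod_eq_of_lt hi] at this
    have hsumx : (p : ℝ) * x (E 0) = 1 := by
      rw [← hxsum, hsum x hxs,
        Finset.sum_congr rfl (fun i hi => keyi i (Finset.mem_range.mp hi)),
        Finset.sum_const, Finset.card_range, nsmul_eq_mul]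
    have hval : x (E 0) = 1 / (p : ℝ) := by
      field_simp
      linarith
    funext g
    rw [hρ]
    by_cases hg : g ∈ T
    · rw [if_pos hg]
      obtain ⟨i, hir, rfl⟩ := Finset.mem_image.mp hg
      rw [keyi i (Finset.mem_range.mp hir), hval]
    · rw [if_neg hg, hxs g hg]
  rw [mem_extremePoints]
  refine ⟨hmemP, fun x₁ hx₁ x₂ hx₂ hseg => ?_⟩
  obtain ⟨a, b, ha, hb, hab, heq⟩ := hseg
  have h0 : ∀ g, g ∉ T → x₁ g = 0 ∧ x₂ g = 0 := by
    intro g hg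
    have hρ0 : windowDist w p K g = 0 := hsupρ g hg
    have hpt : a * x₁ g + b * x₂ g = 0 := by
      have := congrFun heq g
      simpa [hρ0] using this
    have h1 := hx₁.1.1 g
    have h2 := hx₂.1.1 g
    constructor <;> nlinarith
  exact ⟨hconst x₁ hx₁ (fun g hg => (h0 g hg).1),
    hconst x₂ hx₂ (fun g hg => (h0 g hg).2)⟩

end CycleAux

/-- Let `γ` be a simple directed cycle of length `p` in the de Bruijn
graph `B(n−1,s)` with `n = k+1`, presented as a periodic token sequence `w` of minimal
period `p` whose `p` cyclic length-`k` windows (the visited vertices) are pairwise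
distinct.  Then for every `j = (k + d) + 1 ≥ n`:
* the `p` cyclic length-`j` windows of `w` are pairwise distinct;
* the induced `j`-gram distribution (mass `1/p` on each of these windows) is an
  extreme point of the polytope `F_j` of `j`-gram distributions satisfying flow
  balance; and
* distinct simple cycles (i.e. with different sets of traversed `n`-grams) induce
  distinct `j`-gram distributions. -/
theorem cycle_projections_extreme [Fintype σ] [DecidableEq σ]
    (k : ℕ) (hk : 1 ≤ k) (hs : 2 ≤ Fintype.card σ)
    (p : ℕ) (hp : 0 < p) (w : ℕ → σ)
    (hper : ∀ i, w (i + p) = w i)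
    (hsimple : ∀ i j, i < p → j < p →
      (∀ t : Fin k, w (i + (t : ℕ)) = w (j + (t : ℕ))) → i = j) :
    (∀ d : ℕ,
      (∀ i j, i < p → j < p →
        (∀ t : Fin (k + d + 1), w (i + (t : ℕ)) = w (j + (t : ℕ))) → i = j) ∧
      windowDist w p (k + d) ∈ Set.extremePoints ℝ (FlowPolytope σ (k + d))) ∧
    (∀ (p' : ℕ) (w' : ℕ → σ), 0 < p' → (∀ i, w' (i + p') = w' i) →
      (∀ i j, i < p' → j < p' →
        (∀ t : Fin k, w' (i + (t : ℕ)) = w' (j + (t : ℕ))) → i = j) →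
      {g : Fin (k + 1) → σ | ∃ i < p, ∀ t : Fin (k + 1), w (i + (t : ℕ)) = g t} ≠
        {g : Fin (k + 1) → σ | ∃ i < p', ∀ t : Fin (k + 1), w' (i + (t : ℕ)) = g t} →
      ∀ d : ℕ, windowDist w p (k + d) ≠ windowDist w' p' (k + d)) := by
  classical
  constructor
  · intro d
    have hvert : ∀ i j, i < p → j < p →
        (∀ t : Fin (k + d), w (i + (t : ℕ)) = w (j + (t : ℕ))) → i = j := by
      intro i j hi hj h
      refine hsimple i j hi hj (fun t => ?_)
      have := h (Fin.castLE (by omega) t)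
      simpa using this
    refine ⟨?_, extreme_main hp hper hvert⟩
    intro i j hi hj h
    refine hsimple i j hi hj (fun t => ?_)
    have := h (Fin.castLE (by omega) t)
    simpa using this
  · intro p' w' hp' hper' hsimple' hne d heq
    apply hne
    have fwdGen : ∀ (q q' : ℕ) (u u' : ℕ → σ), 0 < q →
        windowDist u q (k + d) = windowDist u' q' (k + d) →
        ∀ i < q, ∃ i' < q', ∀ t : Fin (k + d + 1), u' (i' + (t : ℕ)) = u (i + (t : ℕ)) := by
      intro q q' u u' hq hEq i hi
      have h1 : windowDist u' q' (k + d) (fun t => u (i + (t : ℕ))) = 1 / (q : ℝ) := by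
        rw [← hEq]
        unfold windowDist
        rw [if_pos ⟨i, hi, fun t => rfl⟩]
      by_contra hc
      have h0 : windowDist u' q' (k + d) (fun t => u (i + (t : ℕ))) = 0 := by
        unfold windowDist
        exact if_neg hc
      rw [h1] at h0
      exact (one_div_ne_zero (Nat.cast_ne_zero.mpr hq.ne')) h0
    have fwd := fwdGen p p' w w' hp heq
    have bwd := fwdGen p' p w' w hp' heq.symm
    ext g
    simp only [Set.mem_setOf_eq]
    constructor
    · rintro ⟨i, hi, hg⟩
      obtain ⟨i', hi', h⟩ := fwd i hi
      refine ⟨i', hi', fun t => ?_⟩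
      have := h (Fin.castLE (by omega) t)
      rw [← hg t]
      simpa using this
    · rintro ⟨i, hi, hg⟩
      obtain ⟨i', hi', h⟩ := bwd i hi
      refine ⟨i', hi', fun t => ?_⟩
      have := h (Fin.castLE (by omega) t)
      rw [← hg t]
      simpa using this
end
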